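/- arXiv:1106.1638 — 3 statements merged into one kernel-verified Lean document; each statement's English description precedes it below -/
import Mathlib

section
/- Let k ≥ 1 and let F₀, F₁, …, F_k be cumulative distribution functions on ℝ that admit Lebesgue densities and are strictly increasing on ℝ. Let μ_i denote the unique median of F_i for i = 1, …, k, and assume μ₁ ≤ μ₂ ≤ ⋯ ≤ μ_k. Let Y be a random variable with law F₀, and fix nonnegative weights w₁, …, w_k summing to 1. For c > 0 define the spread-adjusted linear pool G_c(y) = Σ_{i=1}^k w_i·F_i(μ_i + (y − μ_i)/c) and its probability integral transform Z_c = G_c(Y). Set v₀ = 0, v_i = w₁ + ⋯ + w_i for i = 1, …, k−1, v_k = 1, and p₀ = F₀(μ₁), p_i = F₀(μ_{i+1}) − F₀(μ_i) for i = 1, …, k−1, p_k = 1 − F₀(μ_k), and define s₀ = Σ_{i=0}^k p_i·(v_i − Σ_{j=0}^k p_j·v_j)². Then for every t ∈ (0, s₀) there exists c > 0 such that Var(Z_c) = t. -/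
open MeasureTheory ProbabilityTheory

section SlpAux

open Filter Set Topology

/-- The cumulative distribution function of a Borel measure on `ℝ`. -/
noncomputable def cdfOf (μ : Measure ℝ) : ℝ → ℝ :=
  fun y => (μ (Set.Iic y)).toReal

lemma cdfOf_eq_cdf (μ : Measure ℝ) [IsProbabilityMeasure μ] : cdfOf μ = ⇑(cdf μ) := by
  funext x; rw [cdf_eq_real]; rfl

lemma cdfOf_continuous (μ : Measure ℝ) [IsProbabilityMeasure μ] (hacμ : μ ≪ volume) :
    Continuous (cdfOf μ) := by
  rw [cdfOf_eq_cdf, continuous_iff_continuousAt]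
  intro x
  rw [(cdf μ).mono.continuousAt_iff_leftLim_eq_rightLim, (cdf μ).rightLim_eq]
  have h1 : μ {x} = 0 := hacμ (Real.volume_singleton)
  have h2 : (cdf μ).measure {x} = 0 := by rw [measure_cdf]; exact h1
  rw [StieltjesFunction.measure_singleton] at h2
  have h3 := (cdf μ).mono.leftLim_le (le_refl x)
  have := ENNReal.ofReal_eq_zero.mp h2
  linarith

lemma cdfOf_tendsto_atTop (μ : Measure ℝ) [IsProbabilityMeasure μ] :
    Tendsto (cdfOf μ) atTop (𝓝 1) := by
  rw [cdfOf_eq_cdf]; exact tendsto_cdf_atTop μ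

lemma cdfOf_tendsto_atBot (μ : Measure ℝ) [IsProbabilityMeasure μ] :
    Tendsto (cdfOf μ) atBot (𝓝 0) := by
  rw [cdfOf_eq_cdf]; exact tendsto_cdf_atBot μ

lemma cdfOf_nonneg (μ : Measure ℝ) (x : ℝ) : 0 ≤ cdfOf μ x :=
  ENNReal.toReal_nonneg

lemma cdfOf_le_one (μ : Measure ℝ) [IsProbabilityMeasure μ] (x : ℝ) : cdfOf μ x ≤ 1 := by
  rw [cdfOf_eq_cdf]; exact cdf_le_one μ x

lemma slp_meas_union_null {μ : Measure ℝ} {s t : Set ℝ} (ht : μ t = 0) : μ (s ∪ t) = μ s :=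
  le_antisymm ((measure_union_le s t).trans (by rw [ht, add_zero])) (measure_mono subset_union_left)

end SlpAux

/-- `slpV w i = v_i = w₁ + ⋯ + w_i` (with `w` indexed from `0`), so `v_0 = 0`. -/
noncomputable def slpV (w : ℕ → ℝ) (i : ℕ) : ℝ :=
  ∑ j ∈ Finset.range i, w j

/-- `slpP F0 med k i = p_i`: with medians `μ₁ ≤ ⋯ ≤ μ_k` (here `med 0, …, med (k-1)`),
`p_0 = F₀(μ₁)`, `p_i = F₀(μ_{i+1}) − F₀(μ_i)` for `1 ≤ i ≤ k−1`, and `p_k = 1 − F₀(μ_k)`. -/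
noncomputable def slpP (F0 : ℝ → ℝ) (med : ℕ → ℝ) (k i : ℕ) : ℝ :=
  if i = 0 then F0 (med 0)
  else if i = k then 1 - F0 (med (k - 1))
  else F0 (med i) - F0 (med (i - 1))

/-- `slpS0 = s₀ = Σ_{i=0}^k p_i (v_i − Σ_{j=0}^k p_j v_j)²`. -/
noncomputable def slpS0 (F0 : ℝ → ℝ) (med : ℕ → ℝ) (w : ℕ → ℝ) (k : ℕ) : ℝ :=
  ∑ i ∈ Finset.range (k + 1),
    slpP F0 med k i * (slpV w i - ∑ j ∈ Finset.range (k + 1), slpP F0 med k j * slpV w j) ^ 2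

open Filter Set Topology in
set_option maxHeartbeats 1000000 in
/-- **Proposition 8 of Gneiting–Ranjan.** For the spread-adjusted linear
pool `G_c(y) = Σᵢ wᵢ Fᵢ(μᵢ + (y − μᵢ)/c)` of strictly increasing cumulative distribution
functions `F₁, …, F_k` admitting Lebesgue densities, with medians `μ₁ ≤ ⋯ ≤ μ_k`, an
observation `Y ~ F₀`, and PIT `Z_c = G_c(Y)`: as `c > 0` varies, `Var(Z_c)` attains every
value in `(0, s₀)`. (Components are indexed by `0, …, k−1` here.) -/
theorem slp_variance_attains_values
    {Ω : Type*} [MeasurableSpace Ω] (Q : Measure Ω) [IsProbabilityMeasure Q]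
    (k : ℕ) (hk : 1 ≤ k)
    (μ0 : Measure ℝ) [IsProbabilityMeasure μ0] (hac0 : μ0 ≪ volume)
    (F0 : ℝ → ℝ) (hF0 : F0 = cdfOf μ0) (hF0mono : StrictMono F0)
    (μc : ℕ → Measure ℝ) (hprob : ∀ i < k, IsProbabilityMeasure (μc i))
    (hac : ∀ i < k, μc i ≪ volume)
    (F : ℕ → ℝ → ℝ) (hF : ∀ i < k, F i = cdfOf (μc i))
    (hFmono : ∀ i < k, StrictMono (F i))
    (med : ℕ → ℝ) (hmed : ∀ i < k, F i (med i) = 1 / 2)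
    (hmedmono : ∀ i j, i ≤ j → j < k → med i ≤ med j)
    (w : ℕ → ℝ) (hw : ∀ i < k, 0 ≤ w i) (hw1 : ∑ i ∈ Finset.range k, w i = 1)
    (Y : Ω → ℝ) (hYmeas : Measurable Y) (hYlaw : Q.map Y = μ0) :
    ∀ t : ℝ, 0 < t → t < slpS0 F0 med w k →
      ∃ c : ℝ, 0 < c ∧
        variance (fun ω => ∑ i ∈ Finset.range k, w i * F i (med i + (Y ω - med i) / c)) Q
          = t := by
  intro t ht hts
  classical
  -- basic facts on component cdfs
  have hFcont : ∀ i < k, Continuous (F i) := fun i hi => by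
    haveI := hprob i hi; rw [hF i hi]; exact cdfOf_continuous _ (hac i hi)
  have hF0' : ∀ i < k, ∀ x, 0 ≤ F i x := fun i hi x => by
    rw [hF i hi]; exact cdfOf_nonneg _ x
  have hF1' : ∀ i < k, ∀ x, F i x ≤ 1 := fun i hi x => by
    haveI := hprob i hi; rw [hF i hi]; exact cdfOf_le_one _ x
  have hFtop : ∀ i < k, Tendsto (F i) atTop (𝓝 1) := fun i hi => by
    haveI := hprob i hi; rw [hF i hi]; exact cdfOf_tendsto_atTop _
  have hFbot : ∀ i < k, Tendsto (F i) atBot (𝓝 0) := fun i hi => by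
    haveI := hprob i hi; rw [hF i hi]; exact cdfOf_tendsto_atBot _
  -- the spread-adjusted linear pool
  set G : ℝ → ℝ → ℝ := fun c y => ∑ i ∈ Finset.range k, w i * F i (med i + (y - med i) / c)
    with hGdef
  have hGnonneg : ∀ c y, 0 ≤ G c y := fun c y =>
    Finset.sum_nonneg fun i hi =>
      mul_nonneg (hw i (Finset.mem_range.mp hi)) (hF0' i (Finset.mem_range.mp hi) _)
  have hGle : ∀ c y, G c y ≤ 1 := fun c y => by
    calc G c y ≤ ∑ i ∈ Finset.range k, w i := Finset.sum_le_sum fun i hi => by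
          have hik := Finset.mem_range.mp hi
          calc w i * F i (med i + (y - med i) / c) ≤ w i * 1 :=
                mul_le_mul_of_nonneg_left (hF1' i hik _) (hw i hik)
            _ = w i := mul_one _
      _ = 1 := hw1
  have hGabs : ∀ c y, |G c y| ≤ 1 := fun c y =>
    abs_le.mpr ⟨by linarith [hGnonneg c y], hGle c y⟩
  have hGcont : ∀ c, Continuous (G c) := fun c => by
    apply continuous_finset_sum
    intro i hi
    exact continuous_const.mul ((hFcont i (Finset.mem_range.mp hi)).comp
      (continuous_const.add ((continuous_id.sub continuous_const).div_const c)))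
  have hGc : ∀ y : ℝ, ∀ c₀ : ℝ, c₀ ≠ 0 → ContinuousAt (fun c => G c y) c₀ := by
    intro y c₀ hc₀
    apply tendsto_finset_sum
    intro i hi
    exact continuousAt_const.mul (((hFcont i (Finset.mem_range.mp hi)).continuousAt).comp
      (continuousAt_const.add (continuousAt_const.div continuousAt_id hc₀)))
  -- the limit function as c → 0⁺
  set v : ℝ → ℝ := fun y => ∑ j ∈ Finset.range k, (if med j < y then w j else 0) with hvdef
  -- pointwise limit as c → 0⁺ off the medians
  have hlim0 : ∀ y : ℝ, (∀ i < k, y ≠ med i) →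
      Tendsto (fun c => G c y) (𝓝[>] (0:ℝ)) (𝓝 (v y)) := by
    intro y hy
    apply tendsto_finset_sum
    intro i hi
    have hik := Finset.mem_range.mp hi
    rcases (hy i hik).lt_or_gt with hlt | hgt
    · -- y < med i : term → 0
      rw [if_neg (not_lt.mpr hlt.le)]
      have harg : Tendsto (fun c : ℝ => med i + (y - med i) / c) (𝓝[>] (0:ℝ)) atBot := by
        apply tendsto_atBot_add_const_left
        have h2 : Tendsto (fun c : ℝ => (y - med i) * c⁻¹) (𝓝[>] (0:ℝ)) atBot :=
          (tendsto_const_mul_atBot_of_neg (by linarith)).mpr tendsto_inv_nhdsGT_zero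
        exact h2.congr fun c => (div_eq_mul_inv _ _).symm
      have := ((hFbot i hik).comp harg).const_mul (w i)
      simpa using this
    · -- med i < y : term → w i
      rw [if_pos hgt]
      have harg : Tendsto (fun c : ℝ => med i + (y - med i) / c) (𝓝[>] (0:ℝ)) atTop := by
        apply tendsto_atTop_add_const_left
        have h2 : Tendsto (fun c : ℝ => (y - med i) * c⁻¹) (𝓝[>] (0:ℝ)) atTop :=
          (tendsto_const_mul_atTop_of_pos (by linarith)).mpr tendsto_inv_nhdsGT_zero
        exact h2.congr fun c => (div_eq_mul_inv _ _).symm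
      have := ((hFtop i hik).comp harg).const_mul (w i)
      simpa using this
  -- pointwise limit as c → ∞
  have hlimtop : ∀ y : ℝ, Tendsto (fun c => G c y) atTop (𝓝 (1/2 : ℝ)) := by
    intro y
    have h : Tendsto (fun c => G c y) atTop (𝓝 (∑ i ∈ Finset.range k, w i * (1/2 : ℝ))) := by
      apply tendsto_finset_sum
      intro i hi
      have hik := Finset.mem_range.mp hi
      have harg : Tendsto (fun c : ℝ => med i + (y - med i) / c) atTop (𝓝 (med i)) := by
        have h2 : Tendsto (fun c : ℝ => (y - med i) / c) atTop (𝓝 0) :=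
          Tendsto.div_atTop tendsto_const_nhds tendsto_id
        simpa using tendsto_const_nhds.add h2
      have := (((hFcont i hik).tendsto (med i)).comp harg).const_mul (w i)
      rwa [hmed i hik] at this
    rwa [← Finset.sum_mul, hw1, one_mul] at h
  -- the variance as a function of c
  set g : ℝ → ℝ := fun c => (∫ y, (G c y)^2 ∂μ0) - (∫ y, G c y ∂μ0)^2 with hgdef
  -- variance equals g c
  have key : ∀ c : ℝ,
      variance (fun ω => ∑ i ∈ Finset.range k, w i * F i (med i + (Y ω - med i) / c)) Q
        = g c := by
    intro c
    have hZm : AEStronglyMeasurable (fun ω => G c (Y ω)) Q :=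
      ((hGcont c).measurable.comp hYmeas).aestronglyMeasurable
    have hZ2 : MemLp (fun ω => G c (Y ω)) 2 Q :=
      MemLp.of_bound hZm 1 (ae_of_all _ fun ω => by
        simpa [Real.norm_eq_abs] using hGabs c (Y ω))
    have hv := variance_eq_sub hZ2
    have h1 : ∫ ω, G c (Y ω) ∂Q = ∫ y, G c y ∂μ0 := by
      rw [← hYlaw]
      exact (integral_map hYmeas.aemeasurable ((hGcont c).aestronglyMeasurable)).symm
    have h2 : ∫ ω, (G c (Y ω))^2 ∂Q = ∫ y, (G c y)^2 ∂μ0 := by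
      rw [← hYlaw]
      exact (integral_map hYmeas.aemeasurable
        (((hGcont c).pow 2).aestronglyMeasurable)).symm
    show variance (fun ω => G c (Y ω)) Q = g c
    rw [hv, hgdef]
    simp only [Pi.pow_apply]
    rw [h1, h2]
  -- continuity of g on (0, ∞)
  have hgcont : ContinuousOn g (Set.Ioi (0:ℝ)) := by
    intro c₀ hc₀
    apply ContinuousAt.continuousWithinAt
    have hI1 : ContinuousAt (fun c => ∫ y, G c y ∂μ0) c₀ := by
      apply continuousAt_of_dominated (bound := fun _ => (1:ℝ))
      · exact Eventually.of_forall fun c => (hGcont c).aestronglyMeasurable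
      · exact Eventually.of_forall fun c => ae_of_all _ fun y => by
          simpa [Real.norm_eq_abs] using hGabs c y
      · exact integrable_const 1
      · exact ae_of_all _ fun y => hGc y c₀ (ne_of_gt hc₀)
    have hI2 : ContinuousAt (fun c => ∫ y, (G c y)^2 ∂μ0) c₀ := by
      apply continuousAt_of_dominated (bound := fun _ => (1:ℝ))
      · exact Eventually.of_forall fun c => ((hGcont c).pow 2).aestronglyMeasurable
      · exact Eventually.of_forall fun c => ae_of_all _ fun y => by
          have h2 : |(G c y)^2| ≤ 1 := by
            rw [abs_pow]; exact pow_le_one₀ (abs_nonneg _) (hGabs c y)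
          simpa [Real.norm_eq_abs] using h2
      · exact integrable_const 1
      · exact ae_of_all _ fun y => (hGc y c₀ (ne_of_gt hc₀)).pow 2
    exact hI2.sub (hI1.pow 2)
  -- limit of g at infinity is 0
  have htopg : Tendsto g atTop (𝓝 0) := by
    have h1 : Tendsto (fun c => ∫ y, G c y ∂μ0) atTop (𝓝 (∫ _ : ℝ, (1/2 : ℝ) ∂μ0)) := by
      apply tendsto_integral_filter_of_dominated_convergence (fun _ => (1:ℝ))
      · exact Eventually.of_forall fun c => (hGcont c).aestronglyMeasurable
      · exact Eventually.of_forall fun c => ae_of_all _ fun y => by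
          simpa [Real.norm_eq_abs] using hGabs c y
      · exact integrable_const 1
      · exact ae_of_all _ fun y => hlimtop y
    have h2 : Tendsto (fun c => ∫ y, (G c y)^2 ∂μ0) atTop
        (𝓝 (∫ _ : ℝ, ((1:ℝ)/2)^2 ∂μ0)) := by
      apply tendsto_integral_filter_of_dominated_convergence (fun _ => (1:ℝ))
      · exact Eventually.of_forall fun c => ((hGcont c).pow 2).aestronglyMeasurable
      · exact Eventually.of_forall fun c => ae_of_all _ fun y => by
          have h2' : |(G c y)^2| ≤ 1 := by
            rw [abs_pow]; exact pow_le_one₀ (abs_nonneg _) (hGabs c y)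
          simpa [Real.norm_eq_abs] using h2'
      · exact integrable_const 1
      · exact ae_of_all _ fun y => (hlimtop y).pow 2
    have h3 := h2.sub (h1.pow 2)
    simp only [integral_const, measure_univ, ENNReal.toReal_one, probReal_univ, smul_eq_mul, one_mul] at h3
    have h4 : ((1:ℝ)/2)^2 - ((1:ℝ)/2)^2 = 0 := by ring
    rw [h4] at h3
    exact h3
  -- almost every point avoids the medians
  have hgood : ∀ᵐ y ∂μ0, ∀ i < k, y ≠ med i := by
    have h1 : ∀ i : ℕ, ∀ᵐ y ∂μ0, y ≠ med i := by
      intro i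
      have hs : μ0 {med i} = 0 := hac0 Real.volume_singleton
      rw [ae_iff]
      convert hs using 2
      simp [Set.ext_iff]
    have h2 : ∀ᵐ y ∂μ0, ∀ i ∈ Finset.range k, y ≠ med i :=
      (Finset.range k).eventually_all.mpr fun i _ => h1 i
    filter_upwards [h2] with y hy i hik using hy i (Finset.mem_range.mpr hik)
  -- the partition sets
  set S : ℕ → Set ℝ := fun i =>
    if i = 0 then Set.Iio (med 0)
    else if i = k then Set.Ioi (med (k-1))
    else Set.Ioo (med (i-1)) (med i) with hSdef
  have hS0' : S 0 = Set.Iio (med 0) := by simp [hSdef]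
  have hSk : S k = Set.Ioi (med (k-1)) := by simp [hSdef, (show k ≠ 0 by omega)]
  have hSmid : ∀ i, i ≠ 0 → i ≠ k → S i = Set.Ioo (med (i-1)) (med i) := by
    intro i h1 h2; simp [hSdef, h1, h2]
  have hSmeas : ∀ i, MeasurableSet (S i) := by
    intro i
    by_cases h0 : i = 0
    · rw [h0, hS0']; exact measurableSet_Iio
    by_cases hk' : i = k
    · rw [hk', hSk]; exact measurableSet_Ioi
    · rw [hSmid i h0 hk']; exact measurableSet_Ioo
  -- coverage
  have hcover : ∀ y : ℝ, (∀ i < k, y ≠ med i) → ∃ i ≤ k, y ∈ S i := by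
    intro y hy
    by_cases h0 : y < med 0
    · exact ⟨0, Nat.zero_le k, by rw [hS0']; exact h0⟩
    by_cases hk' : med (k-1) < y
    · exact ⟨k, le_refl k, by rw [hSk]; exact hk'⟩
    have hex : ∃ j, j < k ∧ y < med j := by
      refine ⟨k-1, by omega, ?_⟩
      rcases (hy (k-1) (by omega)).lt_or_gt with h | h
      · exact h
      · exact absurd h hk'
    set j := Nat.find hex with hjdef
    obtain ⟨hjk, hyj⟩ := Nat.find_spec hex
    have hj0 : j ≠ 0 := by
      intro hj
      apply h0
      have h' : y < med j := hyj
      rwa [hj] at h'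
    refine ⟨j, hjk.le, ?_⟩
    rw [hSmid j hj0 (by omega)]
    constructor
    · have hmin := Nat.find_min hex (m := j - 1) (by omega)
      push_neg at hmin
      exact lt_of_le_of_ne (hmin (by omega)) (hy (j-1) (by omega)).symm
    · exact hyj
  -- value of v on the pieces
  have hval : ∀ i ≤ k, ∀ y ∈ S i, v y = slpV w i := by
    intro i hik y hy
    have hmem : ∀ j < k, (med j < y ↔ j < i) := by
      intro j hjk
      by_cases hi0 : i = 0
      · rw [hi0, hS0', Set.mem_Iio] at hy
        have h1 : med 0 ≤ med j := hmedmono 0 j (Nat.zero_le j) hjk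
        constructor
        · intro h; linarith
        · intro h; rw [hi0] at h; omega
      by_cases hik' : i = k
      · rw [hik', hSk, Set.mem_Ioi] at hy
        constructor
        · intro _; rw [hik']; exact hjk
        · intro _
          calc med j ≤ med (k-1) := hmedmono j (k-1) (by omega) (by omega)
            _ < y := hy
      · rw [hSmid i hi0 hik', Set.mem_Ioo] at hy
        obtain ⟨hy1, hy2⟩ := hy
        constructor
        · intro h
          by_contra hcon
          push_neg at hcon
          have h2 : med i ≤ med j := hmedmono i j hcon hjk
          linarith
        · intro h
          have h2 : med j ≤ med (i-1) := hmedmono j (i-1) (by omega) (by omega)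
          linarith
    have hcongr : ∀ j ∈ Finset.range k,
        (if med j < y then w j else 0) = (if j ∈ Finset.range i then w j else 0) := by
      intro j hj
      have hjk := Finset.mem_range.mp hj
      by_cases hcase : med j < y
      · rw [if_pos hcase, if_pos (Finset.mem_range.mpr ((hmem j hjk).mp hcase))]
      · rw [if_neg hcase,
          if_neg (fun hmem' => hcase ((hmem j hjk).mpr (Finset.mem_range.mp hmem')))]
    show (∑ j ∈ Finset.range k, if med j < y then w j else 0) = slpV w i
    rw [Finset.sum_congr rfl hcongr, Finset.sum_ite_mem,
      Finset.inter_eq_right.mpr (Finset.range_subset_range.mpr hik)]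
    rfl
  -- the pieces are disjoint
  have hub : ∀ i, i < k → S i ⊆ Set.Iio (med i) := by
    intro i hik
    by_cases h0 : i = 0
    · rw [h0, hS0']
    · rw [hSmid i h0 (by omega)]
      exact Set.Ioo_subset_Iio_self
  have hlb : ∀ i, 1 ≤ i → i ≤ k → S i ⊆ Set.Ioi (med (i-1)) := by
    intro i h1 hik
    by_cases hk' : i = k
    · rw [hk', hSk]
    · rw [hSmid i (by omega) hk']
      exact Set.Ioo_subset_Ioi_self
  have hdisj : ∀ i ≤ k, ∀ j ≤ k, i ≠ j → ∀ y ∈ S i, y ∉ S j := by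
    have haux : ∀ i j, i < j → j ≤ k → ∀ y ∈ S i, y ∉ S j := by
      intro i j hij hjk y hyi hyj
      have h1 : y < med i := hub i (by omega) hyi
      have h2 : med (j-1) < y := hlb j (by omega) hjk hyj
      have h3 : med i ≤ med (j-1) := hmedmono i (j-1) (by omega) (by omega)
      linarith
    intro i hik j hjk hij y hyi hyj
    rcases hij.lt_or_gt with h | h
    · exact haux i j h hjk y hyi hyj
    · exact haux j i h hik y hyj hyi
  -- measures of the pieces
  have hatom : ∀ x : ℝ, μ0 {x} = 0 := fun x => hac0 Real.volume_singleton
  have hIio : ∀ a : ℝ, (μ0 (Set.Iio a)).toReal = F0 a := by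
    intro a
    have h : μ0 (Set.Iic a) = μ0 (Set.Iio a) := by
      rw [← Set.Iio_union_right, slp_meas_union_null (hatom a)]
    rw [hF0]
    unfold cdfOf
    rw [h]
  have hIoc : ∀ a b : ℝ, a ≤ b → (μ0 (Set.Ioc a b)).toReal = F0 b - F0 a := by
    intro a b hab
    rw [← Set.Iic_sdiff_Iic,
      measure_diff (Set.Iic_subset_Iic.mpr hab) measurableSet_Iic.nullMeasurableSet
        (measure_ne_top μ0 _),
      ENNReal.toReal_sub_of_le (measure_mono (Set.Iic_subset_Iic.mpr hab)) (measure_ne_top μ0 _),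
      hF0]
    rfl
  have hIoo : ∀ a b : ℝ, a ≤ b → (μ0 (Set.Ioo a b)).toReal = F0 b - F0 a := by
    intro a b hab
    rcases eq_or_lt_of_le hab with h | h
    · rw [← h]; simp
    · rw [← hIoc a b hab]
      congr 1
      rw [← Set.Ioo_union_right h, slp_meas_union_null (hatom b)]
  have hIoi : ∀ a : ℝ, (μ0 (Set.Ioi a)).toReal = 1 - F0 a := by
    intro a
    rw [← Set.compl_Iic, prob_compl_eq_one_sub measurableSet_Iic,
      ENNReal.toReal_sub_of_le prob_le_one ENNReal.one_ne_top, ENNReal.toReal_one, hF0]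
    rfl
  have hSP : ∀ i ≤ k, (μ0 (S i)).toReal = slpP F0 med k i := by
    intro i hik
    by_cases h0 : i = 0
    · rw [h0, hS0', show slpP F0 med k 0 = F0 (med 0) from if_pos rfl]
      exact hIio (med 0)
    by_cases hk' : i = k
    · rw [hk', hSk, show slpP F0 med k k = 1 - F0 (med (k-1)) by
        unfold slpP; rw [if_neg (show k ≠ 0 by omega), if_pos rfl]]
      exact hIoi (med (k-1))
    · rw [hSmid i h0 hk', show slpP F0 med k i = F0 (med i) - F0 (med (i-1)) by
        unfold slpP; rw [if_neg h0, if_neg hk']]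
      exact hIoo _ _ (hmedmono (i-1) i (by omega) (by omega))
  -- the key integral identity
  have hint : ∀ h : ℝ → ℝ, (∫ y, h (v y) ∂μ0)
      = ∑ i ∈ Finset.range (k+1), slpP F0 med k i * h (slpV w i) := by
    intro h
    have hae : (fun y => h (v y)) =ᵐ[μ0]
        (fun y => ∑ i ∈ Finset.range (k+1), (S i).indicator (fun _ => h (slpV w i)) y) := by
      filter_upwards [hgood] with y hy
      obtain ⟨i, hik, hyi⟩ := hcover y hy
      rw [hval i hik y hyi]
      rw [Finset.sum_eq_single i]
      · rw [Set.indicator_of_mem hyi]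
      · intro j hj hji
        exact Set.indicator_of_notMem
          (hdisj i hik j (by have := Finset.mem_range.mp hj; omega) hji.symm y hyi) _
      · intro hcon; exact absurd (Finset.mem_range.mpr (by omega)) hcon
    rw [integral_congr_ae hae, integral_finset_sum]
    · apply Finset.sum_congr rfl
      intro i hi
      rw [integral_indicator_const _ (hSmeas i), smul_eq_mul, measureReal_def,
        hSP i (by have := Finset.mem_range.mp hi; omega)]
    · intro i _
      exact (integrable_const _).indicator (hSmeas i)
  have hIv : (∫ y, v y ∂μ0) = ∑ i ∈ Finset.range (k+1), slpP F0 med k i * slpV w i :=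
    hint (fun x => x)
  have hIv2 : (∫ y, (v y)^2 ∂μ0)
      = ∑ i ∈ Finset.range (k+1), slpP F0 med k i * (slpV w i)^2 :=
    hint (fun x => x^2)
  -- the p_i sum to one
  have hsumP : ∑ i ∈ Finset.range (k+1), slpP F0 med k i = 1 := by
    set A : ℕ → ℝ := fun n => if n = 0 then (0:ℝ) else if n = k+1 then 1 else F0 (med (n-1))
      with hAdef
    have hA : ∀ i ∈ Finset.range (k+1), slpP F0 med k i = A (i+1) - A i := by
      intro i hi
      have hik : i ≤ k := by
        have := Finset.mem_range.mp hi; omega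
      by_cases h0 : i = 0
      · rw [h0]
        simp [slpP, hAdef, (show (1:ℕ) ≠ k+1 by omega), (show k ≠ 0 by omega)]
      by_cases hk' : i = k
      · rw [hk']
        simp [slpP, hAdef, (show k ≠ 0 by omega), (show k ≠ k+1 by omega)]
      · simp [slpP, hAdef, h0, hk', (show i+1 ≠ k+1 by omega), (show i ≠ k+1 by omega)]
    rw [Finset.sum_congr rfl hA, Finset.sum_range_sub]
    simp [hAdef]
  -- algebraic identity for s₀
  have hS0eq : slpS0 F0 med w k
      = (∑ i ∈ Finset.range (k+1), slpP F0 med k i * (slpV w i)^2)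
        - (∑ i ∈ Finset.range (k+1), slpP F0 med k i * slpV w i)^2 := by
    unfold slpS0
    set m := ∑ j ∈ Finset.range (k+1), slpP F0 med k j * slpV w j with hm
    have hexp : ∀ i ∈ Finset.range (k+1),
        slpP F0 med k i * (slpV w i - m)^2
          = slpP F0 med k i * (slpV w i)^2 - 2*m*(slpP F0 med k i * slpV w i)
            + m^2 * slpP F0 med k i := fun i _ => by ring
    rw [Finset.sum_congr rfl hexp, Finset.sum_add_distrib, Finset.sum_sub_distrib,
      ← Finset.mul_sum, ← Finset.mul_sum, hsumP, ← hm]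
    ring
  -- limit of g at 0⁺ is s₀
  have h0g : Tendsto g (𝓝[>] (0:ℝ)) (𝓝 (slpS0 F0 med w k)) := by
    have h1 : Tendsto (fun c => ∫ y, G c y ∂μ0) (𝓝[>] (0:ℝ)) (𝓝 (∫ y, v y ∂μ0)) := by
      apply tendsto_integral_filter_of_dominated_convergence (fun _ => (1:ℝ))
      · exact Eventually.of_forall fun c => (hGcont c).aestronglyMeasurable
      · exact Eventually.of_forall fun c => ae_of_all _ fun y => by
          simpa [Real.norm_eq_abs] using hGabs c y
      · exact integrable_const 1
      · filter_upwards [hgood] with y hy using hlim0 y hy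
    have h2 : Tendsto (fun c => ∫ y, (G c y)^2 ∂μ0) (𝓝[>] (0:ℝ)) (𝓝 (∫ y, (v y)^2 ∂μ0)) := by
      apply tendsto_integral_filter_of_dominated_convergence (fun _ => (1:ℝ))
      · exact Eventually.of_forall fun c => ((hGcont c).pow 2).aestronglyMeasurable
      · exact Eventually.of_forall fun c => ae_of_all _ fun y => by
          have h2' : |(G c y)^2| ≤ 1 := by
            rw [abs_pow]; exact pow_le_one₀ (abs_nonneg _) (hGabs c y)
          simpa [Real.norm_eq_abs] using h2'
      · exact integrable_const 1
      · filter_upwards [hgood] with y hy using (hlim0 y hy).pow 2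
    have h3 := h2.sub (h1.pow 2)
    rw [hIv, hIv2] at h3
    rw [hS0eq]
    exact h3
  -- conclude with the intermediate value theorem
  obtain ⟨a, hta, ha0⟩ := ((h0g.eventually_const_lt hts).and self_mem_nhdsWithin).exists
  obtain ⟨b, hbt, hab⟩ := ((htopg.eventually_lt_const ht).and (eventually_gt_atTop a)).exists
  have ha0' : (0:ℝ) < a := ha0
  have hcont' : ContinuousOn g (Set.Icc a b) :=
    hgcont.mono (fun x hx => lt_of_lt_of_le ha0' hx.1)
  obtain ⟨c, hc, hgc⟩ := intermediate_value_Icc' hab.le hcont' ⟨hbt.le, hta.le⟩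
  exact ⟨c, lt_of_lt_of_le ha0' hc.1, by rw [key c, hgc]⟩
end

section
/- Let k ≥ 2 and let Y be a standard normal random variable, and let Φ denote the standard normal cumulative distribution function. Then there exists m > 0 such that, setting μ_i = m + i/m for i = 1, …, k, for all nonnegative weights w₁, …, w_k summing to 1 and all c > 0, the random variable Z_c = Σ_{i=1}^k w_i·Φ((Y − μ_i)/c) satisfies Var(Z_c) < 1/12. -/
open MeasureTheory ProbabilityTheory

/-- The standard normal cumulative distribution function `Φ`. -/
noncomputable def stdNormalCDF (x : ℝ) : ℝ :=
  (ProbabilityTheory.gaussianReal 0 1 (Set.Iic x)).toReal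

lemma stdNormalCDF_nonneg (x : ℝ) : 0 ≤ stdNormalCDF x := ENNReal.toReal_nonneg

lemma stdNormalCDF_le_one (x : ℝ) : stdNormalCDF x ≤ 1 := by
  have := prob_le_one (μ := gaussianReal 0 1) (s := Set.Iic x)
  simpa [stdNormalCDF] using ENNReal.toReal_mono (by simp) this

lemma monotone_stdNormalCDF : Monotone stdNormalCDF := by
  intro x y hxy
  exact ENNReal.toReal_mono (measure_ne_top _ _) (measure_mono (Set.Iic_subset_Iic.2 hxy))

lemma measurable_stdNormalCDF : Measurable stdNormalCDF :=
  monotone_stdNormalCDF.measurable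

lemma stdNormalCDF_zero : stdNormalCDF 0 = 1 / 2 := by
  set P := gaussianReal 0 1 with hP
  have hmap : P.map (fun x => -1 * x) = P := by
    have := gaussianReal_map_const_mul (μ := 0) (v := 1) (-1)
    simpa using this
  have hsymm : P (Set.Iic 0) = P (Set.Ici 0) := by
    conv_lhs => rw [← hmap]
    rw [Measure.map_apply (by fun_prop) measurableSet_Iic]
    congr 1
    ext x
    simp
  have hzero : P {(0 : ℝ)} = 0 :=
    gaussianReal_absolutelyContinuous 0 one_ne_zero (by simp)
  have hIci : P (Set.Ici 0) = P (Set.Ioi 0) := by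
    have : Set.Ici (0 : ℝ) = Set.Ioi 0 ∪ {0} := by
      ext x; simp [le_iff_lt_or_eq, or_comm, eq_comm]
    rw [this]
    refine le_antisymm ((measure_union_le _ _).trans ?_) (measure_mono Set.subset_union_left)
    simp [hzero]
  have hsum : P (Set.Iic 0) + P (Set.Ioi 0) = 1 := by
    rw [← measure_union (Set.Iic_disjoint_Ioi le_rfl) measurableSet_Ioi,
      Set.Iic_union_Ioi, measure_univ]
  rw [hIci] at hsymm
  have h1 : (P (Set.Iic 0)).toReal + (P (Set.Ioi 0)).toReal = 1 := by
    rw [← ENNReal.toReal_add (measure_ne_top _ _) (measure_ne_top _ _), hsum]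
    simp
  have h2 : (P (Set.Iic 0)).toReal = (P (Set.Ioi 0)).toReal := by rw [hsymm]
  simp only [stdNormalCDF, ← hP]
  linarith

lemma stdNormalCDF_le_half {x : ℝ} (hx : x ≤ 0) : stdNormalCDF x ≤ 1 / 2 := by
  calc stdNormalCDF x ≤ stdNormalCDF 0 := monotone_stdNormalCDF hx
  _ = 1 / 2 := stdNormalCDF_zero

lemma gaussian_tail_le_exp : (gaussianReal 0 1 (Set.Ioi (4:ℝ))).toReal ≤ Real.exp (-4) := by
  rw [gaussianReal_apply_eq_integral 0 one_ne_zero,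
    ENNReal.toReal_ofReal (integral_nonneg fun x => gaussianPDFReal_nonneg _ _ _)]
  have hint1 : IntegrableOn (gaussianPDFReal 0 1) (Set.Ioi 4) :=
    (integrable_gaussianPDFReal 0 1).integrableOn
  have hint2 : IntegrableOn (fun x => Real.exp (-x)) (Set.Ioi 4) := by
    simpa using exp_neg_integrableOn_Ioi 4 one_pos
  calc ∫ x in Set.Ioi (4:ℝ), gaussianPDFReal 0 1 x
      ≤ ∫ x in Set.Ioi (4:ℝ), Real.exp (-x) := by
        refine setIntegral_mono_on hint1 hint2 measurableSet_Ioi fun x hx => ?_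
        have hx4 : (4:ℝ) < x := hx
        have h2pi : (1:ℝ) ≤ Real.sqrt (2 * Real.pi * 1) := by
          rw [Real.one_le_sqrt]
          nlinarith [Real.pi_gt_three]
        have hinv : (Real.sqrt (2 * Real.pi * 1))⁻¹ ≤ 1 := by
          rw [inv_le_one_iff₀]; right; exact h2pi
        have hexp : Real.exp (-(x - 0) ^ 2 / (2 * 1)) ≤ Real.exp (-x) :=
          Real.exp_le_exp.2 (by nlinarith)
        calc gaussianPDFReal 0 1 x
            = (Real.sqrt (2 * Real.pi * 1))⁻¹ * Real.exp (-(x - 0) ^ 2 / (2 * 1)) := by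
              simp [gaussianPDFReal]
          _ ≤ 1 * Real.exp (-x) :=
              mul_le_mul hinv hexp (Real.exp_nonneg _) one_pos.le
          _ = Real.exp (-x) := one_mul _
    _ = Real.exp (-4) := integral_exp_neg_Ioi 4


/-- With a standard normal observation `Y`, there exists `m > 0` such
that, taking components `F_i = N(μ_i, 1)` with `μ_i = m + i/m` for `i = 1, …, k`
(indexed here by `i = 0, …, k−1` via `μ = m + (i+1)/m`), every spread-adjusted linear pool
`Z_c = Σᵢ wᵢ Φ((Y − μᵢ)/c)` with nonnegative weights summing to one and spread parameter
`c > 0` has `Var(Z_c) < 1/12`: the spread-adjusted linear pool fails to be flexibly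
dispersive (Gneiting–Ranjan). -/
theorem slp_not_flexibly_dispersive
    {Ω : Type*} [MeasurableSpace Ω] (Q : Measure Ω) [IsProbabilityMeasure Q]
    (k : ℕ) (hk : 2 ≤ k)
    (Y : Ω → ℝ) (hYmeas : Measurable Y) (hYlaw : Q.map Y = gaussianReal 0 1) :
    ∃ m : ℝ, 0 < m ∧
      ∀ w : ℕ → ℝ, (∀ i < k, 0 ≤ w i) → ∑ i ∈ Finset.range k, w i = 1 →
        ∀ c : ℝ, 0 < c →
          variance
            (fun ω => ∑ i ∈ Finset.range k,
              w i * stdNormalCDF ((Y ω - (m + ((i : ℝ) + 1) / m)) / c)) Q < 1 / 12 := by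
  refine ⟨4, by norm_num, fun w hw hw1 c hc => ?_⟩
  set Z : Ω → ℝ := fun ω => ∑ i ∈ Finset.range k,
    w i * stdNormalCDF ((Y ω - (4 + ((i : ℝ) + 1) / 4)) / c) with hZdef
  -- basic bounds on Z
  have hZ0 : ∀ ω, 0 ≤ Z ω := fun ω =>
    Finset.sum_nonneg fun i hi =>
      mul_nonneg (hw i (Finset.mem_range.1 hi)) (stdNormalCDF_nonneg _)
  have hZ1 : ∀ ω, Z ω ≤ 1 := by
    intro ω
    calc Z ω ≤ ∑ i ∈ Finset.range k, w i :=
          Finset.sum_le_sum fun i hi => by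
            have := hw i (Finset.mem_range.1 hi)
            nlinarith [stdNormalCDF_le_one ((Y ω - (4 + ((i : ℝ) + 1) / 4)) / c)]
      _ = 1 := hw1
  have hZhalf : ∀ ω, Y ω ≤ 4 → Z ω ≤ 1 / 2 := by
    intro ω hω
    calc Z ω ≤ ∑ i ∈ Finset.range k, w i * (1 / 2) := by
          refine Finset.sum_le_sum fun i hi => ?_
          refine mul_le_mul_of_nonneg_left ?_ (hw i (Finset.mem_range.1 hi))
          refine stdNormalCDF_le_half ?_
          have h1 : (0:ℝ) ≤ ((i : ℝ) + 1) / 4 := by positivity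
          have : Y ω - (4 + ((i : ℝ) + 1) / 4) ≤ 0 := by linarith
          exact div_nonpos_of_nonpos_of_nonneg this hc.le
      _ = 1 / 2 := by rw [← Finset.sum_mul, hw1, one_mul]
  -- measurability and integrability
  have hZmeas : Measurable Z := by
    apply Finset.measurable_sum
    intro i _
    exact measurable_const.mul
      (measurable_stdNormalCDF.comp ((hYmeas.sub_const _).div_const c))
  have hL2 : MemLp Z 2 Q :=
    memLp_of_bounded (ae_of_all _ fun ω => ⟨hZ0 ω, hZ1 ω⟩)
      hZmeas.aestronglyMeasurable 2
  have iZ : Integrable Z Q := hL2.integrable one_le_two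
  have iZ2 : Integrable (fun ω => Z ω ^ 2) Q := hL2.integrable_sq
  -- the tail event
  set A : Set Ω := {ω | 4 < Y ω} with hAdef
  have hAmeas : MeasurableSet A := measurableSet_lt measurable_const hYmeas
  have hQA : (Q A).toReal ≤ Real.exp (-4) := by
    have : Q A = gaussianReal 0 1 (Set.Ioi 4) := by
      rw [← hYlaw, Measure.map_apply hYmeas measurableSet_Ioi]
      rfl
    rw [this]
    exact gaussian_tail_le_exp
  -- variance bound
  have hvar : variance Z Q = (∫ ω, Z ω ^ 2 ∂Q) - (∫ ω, Z ω ∂Q) ^ 2 := by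
    rw [variance_eq_sub hL2]
    rfl
  -- bound E[(Z - 1/4)^2]
  have hB_int : Integrable (fun ω => (Z ω - 1 / 4) ^ 2) Q := by
    have : (fun ω => (Z ω - 1 / 4) ^ 2)
        = fun ω => Z ω ^ 2 - (1 / 2) * Z ω + 1 / 16 := by
      funext ω; ring
    rw [this]
    exact (iZ2.sub (iZ.const_mul _)).add (integrable_const _)
  have h_expand : (∫ ω, (Z ω - 1 / 4) ^ 2 ∂Q)
      = (∫ ω, Z ω ^ 2 ∂Q) - (1 / 2) * (∫ ω, Z ω ∂Q) + 1 / 16 := by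
    have h1 : (fun ω => (Z ω - 1 / 4) ^ 2)
        = fun ω => Z ω ^ 2 - (1 / 2) * Z ω + (1 / 16 : ℝ) := by
      funext ω; ring
    have iZc : Integrable (fun ω => (1 / 2 : ℝ) * Z ω) Q := iZ.const_mul _
    have iZsub : Integrable (fun ω => Z ω ^ 2 - (1 / 2 : ℝ) * Z ω) Q := iZ2.sub iZc
    rw [h1, integral_add iZsub (integrable_const _),
      integral_sub iZ2 iZc, MeasureTheory.integral_const_mul, integral_const]
    simp
  have h_var_le : variance Z Q ≤ ∫ ω, (Z ω - 1 / 4) ^ 2 ∂Q := by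
    rw [hvar, h_expand]
    nlinarith [sq_nonneg ((∫ ω, Z ω ∂Q) - 1 / 4)]
  -- pointwise bound by an indicator
  have hRHS_int : Integrable
      (fun ω => 1 / 16 + A.indicator (fun _ => (1 / 2 : ℝ)) ω) Q :=
    (integrable_const _).add ((integrable_const _).indicator hAmeas)
  have h_ptwise : ∀ ω, (Z ω - 1 / 4) ^ 2
      ≤ 1 / 16 + A.indicator (fun _ => (1 / 2 : ℝ)) ω := by
    intro ω
    by_cases hω : ω ∈ A
    · rw [Set.indicator_of_mem hω]
      nlinarith [hZ0 ω, hZ1 ω]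
    · rw [Set.indicator_of_notMem hω]
      have hY4 : Y ω ≤ 4 := le_of_not_gt hω
      nlinarith [hZ0 ω, hZhalf ω hY4]
  have h_int_le : (∫ ω, (Z ω - 1 / 4) ^ 2 ∂Q)
      ≤ 1 / 16 + (1 / 2) * (Q A).toReal := by
    calc (∫ ω, (Z ω - 1 / 4) ^ 2 ∂Q)
        ≤ ∫ ω, (1 / 16 + A.indicator (fun _ => (1 / 2 : ℝ)) ω) ∂Q :=
          integral_mono hB_int hRHS_int h_ptwise
      _ = 1 / 16 + (1 / 2) * (Q A).toReal := by
          rw [integral_add (integrable_const _) ((integrable_const _).indicator hAmeas),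
            integral_const, integral_indicator_const _ hAmeas]
          simp [mul_comm, Measure.real]
  -- numerics
  have hexp4 : Real.exp (-4) < 1 / 24 := by
    rw [Real.exp_neg]
    have h4 : Real.exp 4 = Real.exp 1 ^ 4 := by
      rw [← Real.exp_nat_mul]; norm_num
    have he : (2.7 : ℝ) < Real.exp 1 := by
      have := Real.exp_one_gt_d9; linarith
    have h24 : (24 : ℝ) < Real.exp 4 := by
      have hp := pow_lt_pow_left₀ he (by norm_num : (0:ℝ) ≤ 2.7) (by norm_num : 4 ≠ 0)
      rw [h4]; norm_num at hp ⊢; linarith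
    rw [inv_lt_iff_one_lt_mul₀ (by positivity)]
    nlinarith
  have : variance Z Q ≤ 1 / 16 + (1 / 2) * Real.exp (-4) := by
    refine h_var_le.trans (h_int_le.trans ?_)
    linarith
  linarith
end

section
/- Let k ≥ 1 and let F₀, F₁, …, F_k be continuous cumulative distribution functions on ℝ such that supp(F₁) ∪ ⋯ ∪ supp(F_k) = supp(F₀). Let Y be a random variable with law F₀, and fix strictly positive weights w₁, …, w_k summing to 1. For α, β > 0 let B_{α,β} denote the cumulative distribution function of the Beta distribution with parameters α and β, and define the beta-transformed linear pool probability integral transform Z_{α,β} = B_{α,β}(Σ_{i=1}^k w_i·F_i(Y)). Then for every v ∈ (0, 1/4) there exist α > 0 and β > 0 such that Var(Z_{α,β}) = v. -/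
open MeasureTheory ProbabilityTheory

/-- The (topological) support of a Borel measure on `ℝ`: the set of points all of whose
open neighbourhoods have positive measure. -/
def msupport (μ : Measure ℝ) : Set ℝ :=
  {x | ∀ U : Set ℝ, IsOpen U → x ∈ U → 0 < μ U}

/-- The cumulative distribution function `B_{a,b}` of the Beta distribution with
parameters `a, b > 0`. -/
noncomputable def betaCDF (a b x : ℝ) : ℝ :=
  (∫ t in Set.Ioc (0 : ℝ) (min x 1), t ^ (a - 1) * (1 - t) ^ (b - 1)) /
    ∫ t in Set.Ioc (0 : ℝ) 1, t ^ (a - 1) * (1 - t) ^ (b - 1)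

open MeasureTheory Set Filter Topology
open scoped ENNReal

namespace BlpAux

noncomputable def bker (a b t : ℝ) : ℝ := t ^ (a-1) * (1-t) ^ (b-1)

lemma bker_nonneg (a b : ℝ) {t : ℝ} (ht0 : 0 ≤ t) (ht1 : t ≤ 1) : 0 ≤ bker a b t :=
  mul_nonneg (Real.rpow_nonneg ht0 _) (Real.rpow_nonneg (by linarith) _)

lemma bker_pos (a b : ℝ) {t : ℝ} (ht0 : 0 < t) (ht1 : t < 1) : 0 < bker a b t :=
  mul_pos (Real.rpow_pos_of_pos ht0 _) (Real.rpow_pos_of_pos (by linarith) _)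

lemma bker_meas (a b : ℝ) : Measurable (bker a b) := by
  unfold bker; fun_prop

lemma bker_reflect (a b t : ℝ) : bker a b (1 - t) = bker b a t := by
  simp [bker, mul_comm]

lemma bker_int_left {a : ℝ} (ha : 0 < a) (b : ℝ) :
    IntegrableOn (bker a b) (Ioc (0:ℝ) 2⁻¹) := by
  have h1 : IntegrableOn (fun t : ℝ => t ^ (a-1)) (Ioc (0:ℝ) 2⁻¹) := by
    have := intervalIntegral.intervalIntegrable_rpow' (a := 0) (b := 2⁻¹) (r := a-1)
      (by linarith)
    rwa [intervalIntegrable_iff_integrableOn_Ioc_of_le (by norm_num)] at this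
  set C : ℝ := max 1 ((2:ℝ)⁻¹ ^ (b-1)) with hC
  have h2 : IntegrableOn (fun t : ℝ => C * t ^ (a-1)) (Ioc (0:ℝ) 2⁻¹) := h1.const_mul C
  refine Integrable.mono h2 ((bker_meas a b).aestronglyMeasurable) ?_
  refine (ae_restrict_iff' measurableSet_Ioc).2 (Filter.Eventually.of_forall ?_)
  intro t ht
  obtain ⟨ht0, ht1⟩ := ht
  have h1t : (2:ℝ)⁻¹ ≤ 1 - t := by linarith
  have hker : 0 ≤ bker a b t := bker_nonneg a b ht0.le (by linarith)
  rw [Real.norm_eq_abs, Real.norm_eq_abs, abs_of_nonneg hker, abs_of_nonneg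
    (mul_nonneg (le_trans zero_le_one (le_max_left _ _)) (Real.rpow_nonneg ht0.le _))]
  rw [bker, mul_comm]
  apply mul_le_mul_of_nonneg_right _ (Real.rpow_nonneg ht0.le _)
  rcases le_or_gt 1 b with hb | hb
  · calc (1-t) ^ (b-1) ≤ 1 := Real.rpow_le_one (by linarith) (by linarith) (by linarith)
      _ ≤ C := le_max_left _ _
  · calc (1-t) ^ (b-1) ≤ (2⁻¹ : ℝ) ^ (b-1) :=
        Real.rpow_le_rpow_of_nonpos (by norm_num) h1t (by linarith)
      _ ≤ C := le_max_right _ _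

lemma bker_integrableOn {a b : ℝ} (ha : 0 < a) (hb : 0 < b) :
    IntegrableOn (bker a b) (Ioc (0:ℝ) 1) := by
  have hL := bker_int_left ha b
  have hR : IntegrableOn (bker a b) (Ioc (2⁻¹ : ℝ) 1) := by
    have h2 : IntervalIntegrable (bker b a) volume 0 2⁻¹ := by
      rw [intervalIntegrable_iff_integrableOn_Ioc_of_le (by norm_num)]
      exact bker_int_left hb a
    have h3 := (h2.comp_sub_left 1).symm
    have h4 : IntervalIntegrable (bker a b) volume (2⁻¹:ℝ) 1 := by
      have he : (fun x : ℝ => bker b a (1 - x)) = bker a b := by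
        funext x; rw [bker_reflect]
      rw [he] at h3
      rw [show (1:ℝ)-2⁻¹ = 2⁻¹ from by norm_num, sub_zero] at h3
      exact h3
    rwa [intervalIntegrable_iff_integrableOn_Ioc_of_le (by norm_num)] at h4
  have := hL.union hR
  apply this.mono_set
  rw [Set.Ioc_union_Ioc_eq_Ioc (by norm_num) (by norm_num)]

lemma betaCDF_eq (a b x : ℝ) :
    betaCDF a b x = (∫ t in Ioc (0:ℝ) (min x 1), bker a b t) / ∫ t in Ioc (0:ℝ) 1, bker a b t :=
  rfl

lemma bker_nonneg_ae (a b : ℝ) {u v : ℝ} (h0u : 0 ≤ u) (hv : v ≤ 1) :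
    0 ≤ᵐ[volume.restrict (Ioc u v)] bker a b := by
  refine (ae_restrict_iff' measurableSet_Ioc).2 (Filter.Eventually.of_forall ?_)
  intro t ht
  exact bker_nonneg a b (le_trans h0u ht.1.le) (le_trans ht.2 hv)

lemma bint_pos {a b u v : ℝ} (ha : 0 < a) (hb : 0 < b) (h0u : 0 ≤ u) (huv : u < v) (hv : v ≤ 1) :
    0 < ∫ t in Ioc u v, bker a b t := by
  have hint : IntegrableOn (bker a b) (Ioc u v) :=
    (bker_integrableOn ha hb).mono_set (Set.Ioc_subset_Ioc h0u hv)
  rw [setIntegral_pos_iff_support_of_nonneg_ae (bker_nonneg_ae a b h0u hv) hint]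
  have hsub : Ioo u v ⊆ Function.support (bker a b) ∩ Ioc u v := by
    intro t ht
    refine ⟨?_, ht.1, ht.2.le⟩
    exact (bker_pos a b (lt_of_le_of_lt h0u ht.1) (lt_of_lt_of_le ht.2 hv)).ne'
  calc (0:ℝ≥0∞) < volume (Ioo u v) := by simp [huv]
    _ ≤ _ := measure_mono hsub

lemma bdenom_pos {a b : ℝ} (ha : 0 < a) (hb : 0 < b) :
    0 < ∫ t in Ioc (0:ℝ) 1, bker a b t := bint_pos ha hb le_rfl one_pos le_rfl

lemma bnum_le_denom {a b : ℝ} (ha : 0 < a) (hb : 0 < b) (x : ℝ) :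
    (∫ t in Ioc (0:ℝ) (min x 1), bker a b t) ≤ ∫ t in Ioc (0:ℝ) 1, bker a b t := by
  apply setIntegral_mono_set (bker_integrableOn ha hb) (bker_nonneg_ae a b le_rfl le_rfl)
  exact HasSubset.Subset.eventuallyLE (Set.Ioc_subset_Ioc le_rfl (min_le_right _ _))

lemma betaCDF_nonneg {a b : ℝ} (ha : 0 < a) (hb : 0 < b) (x : ℝ) : 0 ≤ betaCDF a b x := by
  rw [betaCDF_eq]
  apply div_nonneg _ (bdenom_pos ha hb).le
  apply setIntegral_nonneg measurableSet_Ioc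
  intro t ht
  exact bker_nonneg a b ht.1.le (le_trans ht.2 (min_le_right _ _))

lemma betaCDF_le_one {a b : ℝ} (ha : 0 < a) (hb : 0 < b) (x : ℝ) : betaCDF a b x ≤ 1 := by
  rw [betaCDF_eq, div_le_one (bdenom_pos ha hb)]
  exact bnum_le_denom ha hb x

lemma betaCDF_mono {a b : ℝ} (ha : 0 < a) (hb : 0 < b) : Monotone (betaCDF a b) := by
  intro x y hxy
  rw [betaCDF_eq, betaCDF_eq, div_le_div_iff_of_pos_right (bdenom_pos ha hb)]
  apply setIntegral_mono_set
  · exact (bker_integrableOn ha hb).mono_set (Set.Ioc_subset_Ioc le_rfl (min_le_right _ _))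
  · exact bker_nonneg_ae a b le_rfl (min_le_right _ _)
  · exact HasSubset.Subset.eventuallyLE (Set.Ioc_subset_Ioc le_rfl (min_le_min_right _ hxy))

lemma betaCDF_of_nonpos {a b x : ℝ} (hx : x ≤ 0) : betaCDF a b x = 0 := by
  rw [betaCDF_eq]
  have : Ioc (0:ℝ) (min x 1) = ∅ := Set.Ioc_eq_empty (by simp only [not_lt]; exact le_trans (min_le_left x 1) hx)
  rw [this]
  simp

lemma betaCDF_of_one_le {a b x : ℝ} (ha : 0 < a) (hb : 0 < b) (hx : 1 ≤ x) :
    betaCDF a b x = 1 := by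
  rw [betaCDF_eq, min_eq_right hx, div_self (bdenom_pos ha hb).ne']

lemma betaCDF_measurable {a b : ℝ} (ha : 0 < a) (hb : 0 < b) : Measurable (betaCDF a b) :=
  (betaCDF_mono ha hb).measurable

lemma ae_ne_one : ∀ᵐ t : ℝ ∂volume, t ≠ (1:ℝ) := by
  have h : volume ({(1:ℝ)} : Set ℝ) = 0 := measure_singleton 1
  rw [ae_iff]
  simpa [Set.setOf_eq_eq_singleton] using h

lemma continuousAt_bnum {a b : ℝ} (ha : 0 < a) (hb : 0 < b) {x : ℝ} (hx : x ≤ 1) :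
    ContinuousAt (fun p : ℝ × ℝ => ∫ t in Ioc (0:ℝ) x, bker p.1 p.2 t) (a, b) := by
  have hU : {p : ℝ × ℝ | a/2 < p.1 ∧ b/2 < p.2} ∈ 𝓝 (a, b) := by
    apply IsOpen.mem_nhds
    · exact (isOpen_lt continuous_const continuous_fst).inter
        (isOpen_lt continuous_const continuous_snd)
    · constructor <;> simp <;> linarith
  apply continuousAt_of_dominated (bound := bker (a/2) (b/2))
  · exact Filter.Eventually.of_forall fun p => (bker_meas _ _).aestronglyMeasurable
  · filter_upwards [hU] with p hp
    filter_upwards [ae_restrict_mem measurableSet_Ioc, ae_restrict_of_ae ae_ne_one]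
      with t ht ht1
    have ht0 : 0 < t := ht.1
    have htx : t ≤ 1 := le_trans ht.2 hx
    have ht1' : t < 1 := lt_of_le_of_ne htx ht1
    have hker : 0 ≤ bker p.1 p.2 t := bker_nonneg _ _ ht0.le htx
    rw [Real.norm_eq_abs, abs_of_nonneg hker]
    unfold bker
    apply mul_le_mul
    · exact Real.rpow_le_rpow_of_exponent_ge ht0 htx (by linarith [hp.1])
    · exact Real.rpow_le_rpow_of_exponent_ge (by linarith) (by linarith) (by linarith [hp.2])
    · exact Real.rpow_nonneg (by linarith) _
    · exact Real.rpow_nonneg ht0.le _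
  · exact (bker_integrableOn (by linarith) (by linarith)).mono_set
      (Set.Ioc_subset_Ioc le_rfl hx)
  · filter_upwards [ae_restrict_mem measurableSet_Ioc, ae_restrict_of_ae ae_ne_one]
      with t ht ht1
    have ht0 : 0 < t := ht.1
    have ht1' : t < 1 := lt_of_le_of_ne (le_trans ht.2 hx) ht1
    apply ContinuousAt.mul
    · exact (Real.continuousAt_const_rpow ht0.ne').comp
        ((continuous_fst.sub continuous_const).continuousAt)
    · exact (Real.continuousAt_const_rpow (by linarith : (1:ℝ) - t ≠ 0)).comp
        ((continuous_snd.sub continuous_const).continuousAt)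

lemma continuousAt_betaCDF {a b : ℝ} (ha : 0 < a) (hb : 0 < b) (x : ℝ) :
    ContinuousAt (fun p : ℝ × ℝ => betaCDF p.1 p.2 x) (a, b) := by
  simp only [betaCDF_eq]
  exact (continuousAt_bnum ha hb (min_le_right x 1)).div
    (continuousAt_bnum ha hb le_rfl) (bdenom_pos ha hb).ne'


noncomputable def rho (q t : ℝ) : ℝ := t ^ q * (1-t) ^ (1-q)

lemma rho_pos {q t : ℝ} (ht0 : 0 < t) (ht1 : t < 1) : 0 < rho q t :=
  mul_pos (Real.rpow_pos_of_pos ht0 _) (Real.rpow_pos_of_pos (by linarith) _)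

lemma rho_nonneg {q t : ℝ} (ht0 : 0 ≤ t) (ht1 : t ≤ 1) : 0 ≤ rho q t :=
  mul_nonneg (Real.rpow_nonneg ht0 _) (Real.rpow_nonneg (by linarith) _)

lemma rho_reflect (q t : ℝ) : rho q (1-t) = rho (1-q) t := by
  simp [rho, sub_sub_cancel, mul_comm]

lemma rho_one {q : ℝ} (hq : q < 1) : rho q 1 = 0 := by
  simp [rho, Real.zero_rpow (by linarith : 1 - q ≠ 0)]

lemma rho_lt_rho_left {q : ℝ} (hq1 : q < 1) {x t : ℝ} (hx : 0 < x) (hxt : x < t)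
    (htq : t ≤ q) : rho q x < rho q t := by
  have hq0 : 0 < q := lt_of_le_of_lt' htq (lt_trans hx hxt)
  set L : ℝ → ℝ := fun t => q * Real.log t + (1-q) * Real.log (1-t) with hL
  have hmono : StrictMonoOn L (Ioc (0:ℝ) q) := by
    apply strictMonoOn_of_deriv_pos (convex_Ioc 0 q)
    · intro z hz
      apply ContinuousAt.continuousWithinAt
      apply ContinuousAt.add
      · exact (Real.continuousAt_log hz.1.ne').const_mul q
      · have hz1 : (1:ℝ) - z ≠ 0 := by
          have : z < 1 := lt_of_le_of_lt hz.2 hq1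
          intro h
          have := sub_eq_zero.1 h
          linarith
        exact ((Real.continuousAt_log hz1).comp
          ((continuous_const.sub continuous_id).continuousAt)).const_mul (1-q)
    · intro z hz
      rw [interior_Ioc] at hz
      have hz0 : 0 < z := hz.1
      have hz1 : z < 1 := lt_of_lt_of_le hz.2 hq1.le
      have h1z : 0 < 1 - z := by linarith
      have hd : HasDerivAt L (q * z⁻¹ + (1-q) * ((1-z)⁻¹ * (0-1))) z := by
        apply HasDerivAt.add
        · exact (Real.hasDerivAt_log hz0.ne').const_mul q
        · exact ((Real.hasDerivAt_log h1z.ne').comp z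
            ((hasDerivAt_const z (1:ℝ)).sub (hasDerivAt_id z))).const_mul (1-q)
      rw [hd.deriv]
      have heq : q * z⁻¹ + (1-q) * ((1-z)⁻¹ * (0-1)) = (q - z) / (z * (1-z)) := by
        field_simp
        ring
      rw [heq]
      apply div_pos (by linarith [hz.2]) (mul_pos hz0 h1z)
  have hx1 : x < 1 := lt_of_lt_of_le (lt_of_lt_of_le hxt htq) hq1.le
  have ht1 : t < 1 := lt_of_le_of_lt htq hq1
  have ht0 : 0 < t := lt_trans hx hxt
  have hexp : ∀ z : ℝ, 0 < z → z < 1 → rho q z = Real.exp (L z) := by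
    intro z hz0 hz1
    rw [hL, Real.exp_add, rho, Real.rpow_def_of_pos hz0, Real.rpow_def_of_pos (by linarith),
      mul_comm (Real.log z) q, mul_comm (Real.log (1-z)) (1-q)]
  rw [hexp x hx hx1, hexp t ht0 ht1]
  exact Real.exp_lt_exp.2 (hmono ⟨hx, le_of_lt (lt_of_lt_of_le hxt htq)⟩ ⟨ht0, htq⟩ hxt)

lemma rho_lt_rho_right {q : ℝ} (hq0 : 0 < q) {x t : ℝ} (hqt : q ≤ t) (htx : t < x)
    (hx1 : x < 1) : rho q x < rho q t := by
  have h1 : rho q x = rho (1-q) (1-x) := by rw [← rho_reflect]; norm_num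
  have h2 : rho q t = rho (1-q) (1-t) := by rw [← rho_reflect]; norm_num
  rw [h1, h2]
  exact rho_lt_rho_left (by linarith) (by linarith) (by linarith) (by linarith)

lemma bker_fact {q s t : ℝ} (ht0 : 0 < t) (ht1 : t < 1) :
    bker (s*q) (s*(1-q)) t = rho q t ^ (s-1) * bker q (1-q) t := by
  have h1t : (0:ℝ) < 1 - t := by linarith
  have e1 : s*q - 1 = q*(s-1) + (q-1) := by ring
  have e2 : s*(1-q) - 1 = (1-q)*(s-1) + ((1-q)-1) := by ring
  rw [bker, e1, e2, Real.rpow_add ht0, Real.rpow_add h1t, rho,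
    Real.mul_rpow (Real.rpow_nonneg ht0.le _) (Real.rpow_nonneg h1t.le _),
    ← Real.rpow_mul ht0.le, ← Real.rpow_mul h1t.le, bker]
  rw [mul_comm q (s-1), mul_comm (1-q) (s-1)]
  ring
lemma tendsto_rpow_base_lt_one {r : ℝ} (h0 : 0 < r) (h1 : r < 1) :
    Tendsto (fun s : ℝ => r ^ (s-1)) atTop (𝓝 0) := by
  have he : ∀ s : ℝ, r ^ (s-1) = Real.exp ((s-1) * Real.log r) := fun s => by
    rw [Real.rpow_def_of_pos h0, mul_comm]
  simp_rw [he]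
  apply Real.tendsto_exp_atBot.comp
  exact (tendsto_atTop_add_const_right atTop (-1) tendsto_id).atTop_mul_const_of_neg
    (Real.log_neg h0 h1)

lemma bint_upper {q s u v R : ℝ} (hq0 : 0 < q) (hq1 : q < 1) (hu : 0 ≤ u) (hv : v ≤ 1)
    (hs : 1 ≤ s) (hR0 : 0 ≤ R) (hR : ∀ t ∈ Ioc u v, t < 1 → rho q t ≤ R) :
    (∫ t in Ioc u v, bker (s*q) (s*(1-q)) t) ≤
      R ^ (s-1) * ∫ t in Ioc (0:ℝ) 1, bker q (1-q) t := by
  rcases le_or_gt v u with huv | huv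
  · rw [Set.Ioc_eq_empty (not_lt.2 huv)]
    simp only [Measure.restrict_empty, integral_zero_measure]
    exact mul_nonneg (Real.rpow_nonneg hR0 _)
      (le_of_lt (bdenom_pos hq0 (by linarith)))
  have hsq : 0 < s * q := mul_pos (by linarith) hq0
  have hsq' : 0 < s * (1-q) := mul_pos (by linarith) (by linarith)
  have hint1 : IntegrableOn (bker (s*q) (s*(1-q))) (Ioc u v) :=
    (bker_integrableOn hsq hsq').mono_set (Set.Ioc_subset_Ioc hu hv)
  have hint2 : IntegrableOn (fun t => R ^ (s-1) * bker q (1-q) t) (Ioc u v) :=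
    ((bker_integrableOn hq0 (by linarith)).mono_set (Set.Ioc_subset_Ioc hu hv)).const_mul _
  calc (∫ t in Ioc u v, bker (s*q) (s*(1-q)) t)
      ≤ ∫ t in Ioc u v, R ^ (s-1) * bker q (1-q) t := by
        apply integral_mono_ae hint1 hint2
        filter_upwards [ae_restrict_mem measurableSet_Ioc, ae_restrict_of_ae ae_ne_one]
          with t ht ht1
        have ht0 : 0 < t := lt_of_le_of_lt hu ht.1
        have ht1' : t < 1 := lt_of_le_of_ne (le_trans ht.2 hv) ht1
        rw [bker_fact ht0 ht1']
        apply mul_le_mul_of_nonneg_right _ (bker_nonneg _ _ ht0.le ht1'.le)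
        exact Real.rpow_le_rpow (rho_nonneg ht0.le ht1'.le) (hR t ht ht1') (by linarith)
    _ = R ^ (s-1) * ∫ t in Ioc u v, bker q (1-q) t := integral_const_mul _ _
    _ ≤ R ^ (s-1) * ∫ t in Ioc (0:ℝ) 1, bker q (1-q) t := by
        apply mul_le_mul_of_nonneg_left _ (Real.rpow_nonneg hR0 _)
        apply setIntegral_mono_set (bker_integrableOn hq0 (by linarith))
          (bker_nonneg_ae _ _ le_rfl le_rfl)
        exact HasSubset.Subset.eventuallyLE (Set.Ioc_subset_Ioc hu hv)

lemma bint_lower {q s u v r : ℝ} (hq0 : 0 < q) (hq1 : q < 1) (hu : 0 ≤ u) (hv : v < 1)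
    (hs : 1 ≤ s) (hr0 : 0 ≤ r) (hr : ∀ t ∈ Ioc u v, r ≤ rho q t) :
    r ^ (s-1) * (∫ t in Ioc u v, bker q (1-q) t) ≤
      ∫ t in Ioc u v, bker (s*q) (s*(1-q)) t := by
  rcases le_or_gt v u with huv | huv
  · rw [Set.Ioc_eq_empty (not_lt.2 huv)]
    simp
  have hsq : 0 < s * q := mul_pos (by linarith) hq0
  have hsq' : 0 < s * (1-q) := mul_pos (by linarith) (by linarith)
  have hint1 : IntegrableOn (bker (s*q) (s*(1-q))) (Ioc u v) :=
    (bker_integrableOn hsq hsq').mono_set (Set.Ioc_subset_Ioc hu hv.le)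
  have hint2 : IntegrableOn (fun t => r ^ (s-1) * bker q (1-q) t) (Ioc u v) :=
    ((bker_integrableOn hq0 (by linarith)).mono_set (Set.Ioc_subset_Ioc hu hv.le)).const_mul _
  rw [← integral_const_mul]
  apply integral_mono_ae hint2 hint1
  filter_upwards [ae_restrict_mem measurableSet_Ioc] with t ht
  have ht0 : 0 < t := lt_of_le_of_lt hu ht.1
  have ht1' : t < 1 := lt_of_le_of_lt ht.2 hv
  rw [bker_fact ht0 ht1']
  apply mul_le_mul_of_nonneg_right _ (bker_nonneg _ _ ht0.le ht1'.le)
  exact Real.rpow_le_rpow hr0 (hr t ht) (by linarith)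

lemma tendsto_betaCDF_atTop_lt {q x : ℝ} (hq0 : 0 < q) (hq1 : q < 1) (hx : x < q) :
    Tendsto (fun s => betaCDF (s*q) (s*(1-q)) x) atTop (𝓝 0) := by
  rcases le_or_gt x 0 with hx0 | hx0
  · simpa using tendsto_const_nhds.congr
      (fun s => (betaCDF_of_nonpos (a := s*q) (b := s*(1-q)) hx0).symm)
  set u : ℝ := (x + q) / 2 with hu
  have hxu : x < u := by rw [hu]; linarith
  have huq : u < q := by rw [hu]; linarith
  have hu0 : 0 < u := by rw [hu]; linarith
  have hx1 : x < 1 := lt_trans hx hq1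
  set C1 : ℝ := ∫ t in Ioc (0:ℝ) 1, bker q (1-q) t with hC1
  set C2 : ℝ := ∫ t in Ioc u q, bker q (1-q) t with hC2
  have hC1pos : 0 < C1 := bdenom_pos hq0 (by linarith)
  have hC2pos : 0 < C2 := bint_pos hq0 (by linarith) hu0.le huq hq1.le
  have hrx : 0 < rho q x := rho_pos hx0 hx1
  have hru : 0 < rho q u := rho_pos hu0 (lt_trans huq hq1)
  have hratio : rho q x / rho q u < 1 :=
    (div_lt_one hru).2 (rho_lt_rho_left hq1 hx0 hxu huq.le)
  apply squeeze_zero' (f := fun s => betaCDF (s*q) (s*(1-q)) x) (g := fun s => (rho q x / rho q u) ^ (s-1) * (C1 / C2))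
  · filter_upwards [eventually_ge_atTop (1:ℝ)] with s hs
    exact betaCDF_nonneg (mul_pos (by linarith) hq0) (mul_pos (by linarith) (by linarith)) x
  · filter_upwards [eventually_ge_atTop (1:ℝ)] with s hs
    have hnum : (∫ t in Ioc (0:ℝ) (min x 1), bker (s*q) (s*(1-q)) t) ≤ rho q x ^ (s-1) * C1 := by
      rw [min_eq_left hx1.le]
      apply bint_upper hq0 hq1 le_rfl hx1.le hs hrx.le
      intro t ht ht1
      rcases eq_or_lt_of_le ht.2 with h | h
      · rw [h]
      · exact (rho_lt_rho_left hq1 ht.1 h (by linarith)).le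
    have hden : rho q u ^ (s-1) * C2 ≤ ∫ t in Ioc (0:ℝ) 1, bker (s*q) (s*(1-q)) t := by
      calc rho q u ^ (s-1) * C2 ≤ ∫ t in Ioc u q, bker (s*q) (s*(1-q)) t := by
            apply bint_lower hq0 hq1 hu0.le hq1 hs hru.le
            intro t ht
            exact (rho_lt_rho_left hq1 hu0 ht.1 ht.2).le
        _ ≤ _ := by
            apply setIntegral_mono_set
            · exact bker_integrableOn (mul_pos (by linarith) hq0)
                (mul_pos (by linarith) (by linarith))
            · exact bker_nonneg_ae _ _ le_rfl le_rfl
            · exact HasSubset.Subset.eventuallyLE (Set.Ioc_subset_Ioc hu0.le hq1.le)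
    have hdenpos : 0 < rho q u ^ (s-1) * C2 :=
      mul_pos (Real.rpow_pos_of_pos hru _) hC2pos
    rw [betaCDF_eq]
    calc (∫ t in Ioc (0:ℝ) (min x 1), bker (s*q) (s*(1-q)) t) /
          ∫ t in Ioc (0:ℝ) 1, bker (s*q) (s*(1-q)) t
        ≤ (rho q x ^ (s-1) * C1) / (rho q u ^ (s-1) * C2) := by
          apply div_le_div₀ (mul_nonneg (Real.rpow_nonneg hrx.le _) hC1pos.le) hnum hdenpos hden
      _ = (rho q x / rho q u) ^ (s-1) * (C1 / C2) := by
          rw [mul_div_mul_comm, Real.div_rpow hrx.le hru.le]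
  · simpa using (tendsto_rpow_base_lt_one (div_pos hrx hru) hratio).mul_const (C1 / C2)

lemma tendsto_betaCDF_atTop_gt {q x : ℝ} (hq0 : 0 < q) (hq1 : q < 1) (hx : q < x) :
    Tendsto (fun s => betaCDF (s*q) (s*(1-q)) x) atTop (𝓝 1) := by
  rcases le_or_gt 1 x with hx1 | hx1
  · apply tendsto_const_nhds.congr' (f₁ := fun _ => (1:ℝ))
    filter_upwards [eventually_gt_atTop (0:ℝ)] with s hs
    exact (betaCDF_of_one_le (mul_pos hs hq0) (mul_pos hs (by linarith)) hx1).symm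
  -- q < x < 1
  set v : ℝ := (q + x) / 2 with hv
  have hqv : q < v := by rw [hv]; linarith
  have hvx : v < x := by rw [hv]; linarith
  have hv1 : v < 1 := by rw [hv]; linarith
  have hx0 : 0 < x := lt_trans hq0 hx
  set C1 : ℝ := ∫ t in Ioc (0:ℝ) 1, bker q (1-q) t with hC1
  set C2 : ℝ := ∫ t in Ioc q v, bker q (1-q) t with hC2
  have hC1pos : 0 < C1 := bdenom_pos hq0 (by linarith)
  have hC2pos : 0 < C2 := bint_pos hq0 (by linarith) hq0.le hqv hv1.le
  have hrx : 0 < rho q x := rho_pos hx0 hx1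
  have hrv : 0 < rho q v := rho_pos (lt_trans hq0 hqv) hv1
  have hratio : rho q x / rho q v < 1 :=
    (div_lt_one hrv).2 (rho_lt_rho_right hq0 hqv.le hvx hx1)
  have key : Tendsto (fun s => (∫ t in Ioc x 1, bker (s*q) (s*(1-q)) t) /
      ∫ t in Ioc (0:ℝ) 1, bker (s*q) (s*(1-q)) t) atTop (𝓝 0) := by
    apply squeeze_zero' (g := fun s => (rho q x / rho q v) ^ (s-1) * (C1 / C2))
    · filter_upwards [eventually_ge_atTop (1:ℝ)] with s hs
      apply div_nonneg
      · apply setIntegral_nonneg measurableSet_Ioc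
        intro t ht
        exact bker_nonneg _ _ (le_trans hx0.le ht.1.le) ht.2
      · exact (bdenom_pos (mul_pos (by linarith) hq0)
          (mul_pos (by linarith) (by linarith))).le
    · filter_upwards [eventually_ge_atTop (1:ℝ)] with s hs
      have hnum : (∫ t in Ioc x 1, bker (s*q) (s*(1-q)) t) ≤ rho q x ^ (s-1) * C1 := by
        apply bint_upper hq0 hq1 hx0.le le_rfl hs hrx.le
        intro t ht ht1
        exact (rho_lt_rho_right hq0 (le_trans hqv.le hvx.le) ht.1 ht1).le
      have hden : rho q v ^ (s-1) * C2 ≤ ∫ t in Ioc (0:ℝ) 1, bker (s*q) (s*(1-q)) t := by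
        calc rho q v ^ (s-1) * C2 ≤ ∫ t in Ioc q v, bker (s*q) (s*(1-q)) t := by
              apply bint_lower hq0 hq1 hq0.le hv1 hs hrv.le
              intro t ht
              rcases eq_or_lt_of_le ht.2 with h | h
              · rw [h]
              · exact (rho_lt_rho_right hq0 ht.1.le h hv1).le
          _ ≤ _ := by
              apply setIntegral_mono_set
              · exact bker_integrableOn (mul_pos (by linarith) hq0)
                  (mul_pos (by linarith) (by linarith))
              · exact bker_nonneg_ae _ _ le_rfl le_rfl
              · exact HasSubset.Subset.eventuallyLE (Set.Ioc_subset_Ioc hq0.le hv1.le)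
      have hdenpos : 0 < rho q v ^ (s-1) * C2 :=
        mul_pos (Real.rpow_pos_of_pos hrv _) hC2pos
      calc (∫ t in Ioc x 1, bker (s*q) (s*(1-q)) t) /
            ∫ t in Ioc (0:ℝ) 1, bker (s*q) (s*(1-q)) t
          ≤ (rho q x ^ (s-1) * C1) / (rho q v ^ (s-1) * C2) :=
            div_le_div₀ (mul_nonneg (Real.rpow_nonneg hrx.le _) hC1pos.le) hnum hdenpos hden
        _ = (rho q x / rho q v) ^ (s-1) * (C1 / C2) := by
            rw [mul_div_mul_comm, Real.div_rpow hrx.le hrv.le]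
    · simpa using (tendsto_rpow_base_lt_one (div_pos hrx hrv) hratio).mul_const (C1 / C2)
  have heq : ∀ᶠ s : ℝ in atTop, betaCDF (s*q) (s*(1-q)) x =
      1 - (∫ t in Ioc x 1, bker (s*q) (s*(1-q)) t) /
        ∫ t in Ioc (0:ℝ) 1, bker (s*q) (s*(1-q)) t := by
    filter_upwards [eventually_gt_atTop (0:ℝ)] with s hs
    have hsq : 0 < s * q := mul_pos hs hq0
    have hsq' : 0 < s * (1-q) := mul_pos hs (by linarith)
    have hsplit : (∫ t in Ioc (0:ℝ) x, bker (s*q) (s*(1-q)) t) +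
        (∫ t in Ioc x 1, bker (s*q) (s*(1-q)) t) = ∫ t in Ioc (0:ℝ) 1, bker (s*q) (s*(1-q)) t := by
      rw [← setIntegral_union (Set.Ioc_disjoint_Ioc_of_le le_rfl) measurableSet_Ioc
        ((bker_integrableOn hsq hsq').mono_set (Set.Ioc_subset_Ioc le_rfl hx1.le))
        ((bker_integrableOn hsq hsq').mono_set (Set.Ioc_subset_Ioc hx0.le le_rfl))]
      rw [Set.Ioc_union_Ioc_eq_Ioc hx0.le hx1.le]
    rw [betaCDF_eq, min_eq_left hx1.le, eq_sub_iff_add_eq, ← add_div,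
      hsplit, div_self (bdenom_pos hsq hsq').ne']
  have hlim : Tendsto (fun s : ℝ => 1 - (∫ t in Ioc x 1, bker (s*q) (s*(1-q)) t) /
      ∫ t in Ioc (0:ℝ) 1, bker (s*q) (s*(1-q)) t) atTop (𝓝 (1 - 0)) :=
    tendsto_const_nhds.sub key
  rw [sub_zero] at hlim
  exact Filter.Tendsto.congr' (Filter.EventuallyEq.symm heq) hlim

lemma integral_one_sub_rpow {x b : ℝ} (hx : x < 1) (hb : 0 < b) :
    (∫ t in Ioc x 1, (1-t) ^ (b-1)) = (1-x) ^ b / b := by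
  have h1 : (∫ t in Ioc x 1, (1-t) ^ (b-1)) = ∫ t in x..1, (1-t) ^ (b-1) := by
    rw [intervalIntegral.integral_of_le hx.le]
  rw [h1]
  have h2 := intervalIntegral.integral_comp_sub_left (a := x) (b := 1)
    (fun u : ℝ => u ^ (b-1)) 1
  rw [h2, sub_self]
  rw [integral_rpow (Or.inl (by linarith))]
  rw [sub_add_cancel, Real.zero_rpow hb.ne']
  ring

lemma tendsto_betaCDF_bzero {S x : ℝ} (hS : 2 ≤ S) (hx1 : x < 1) :
    Tendsto (fun b => betaCDF (S-b) b x) (𝓝[>] 0) (𝓝 0) := by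
  rcases le_or_gt x 0 with hx0 | hx0
  · simpa using tendsto_const_nhds.congr
      (fun b => (betaCDF_of_nonpos (a := S-b) (b := b) hx0).symm)
  set K : ℝ := (1-x)⁻¹ with hK
  have hKpos : 0 < K := by rw [hK]; exact inv_pos.2 (by linarith)
  set C : ℝ := (K * x) / (x ^ (S-1) * (1-x)) with hC
  have hxS : 0 < x ^ (S-1) := Real.rpow_pos_of_pos hx0 _
  have hCpos : 0 < C := by
    apply div_pos (mul_pos hKpos hx0) (mul_pos hxS (by linarith))
  apply squeeze_zero' (f := fun b => betaCDF (S-b) b x) (g := fun b => C * b)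
  · filter_upwards [Ioo_mem_nhdsGT_of_mem (Set.mem_Ico.2 ⟨le_refl (0:ℝ), one_pos⟩)] with b hb
    exact betaCDF_nonneg (by linarith [hb.2] : (0:ℝ) < S - b) hb.1 x
  · filter_upwards [Ioo_mem_nhdsGT_of_mem (Set.mem_Ico.2 ⟨le_refl (0:ℝ), one_pos⟩)] with b hb
    obtain ⟨hb0, hb1⟩ := hb
    have hSb : 0 < S - b := by linarith
    have hSb1 : 0 ≤ S - b - 1 := by linarith
    -- numerator bound
    have hnum : (∫ t in Ioc (0:ℝ) (min x 1), bker (S-b) b t) ≤ K * x := by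
      rw [min_eq_left hx1.le]
      have hbd : ∀ t ∈ Ioc (0:ℝ) x, bker (S-b) b t ≤ K := by
        intro t ht
        have ht0 : 0 < t := ht.1
        have htx : t ≤ x := ht.2
        have h1t : 0 < 1 - t := by linarith
        calc bker (S-b) b t = t ^ (S-b-1) * (1-t) ^ (b-1) := rfl
          _ ≤ 1 * (1-x) ^ (b-1) := by
              apply mul_le_mul
              · exact Real.rpow_le_one ht0.le (by linarith) hSb1
              · exact Real.rpow_le_rpow_of_nonpos (by linarith) (by linarith) (by linarith)
              · exact Real.rpow_nonneg h1t.le _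
              · norm_num
          _ ≤ K := by
              rw [one_mul, hK, ← Real.rpow_neg_one (1-x)]
              exact Real.rpow_le_rpow_of_exponent_ge (by linarith) (by linarith) (by linarith)
      calc (∫ t in Ioc (0:ℝ) x, bker (S-b) b t) ≤ ∫ _t in Ioc (0:ℝ) x, K := by
            apply integral_mono_ae
              ((bker_integrableOn hSb hb0).mono_set (Set.Ioc_subset_Ioc le_rfl hx1.le))
              (integrableOn_const (by simp))
            filter_upwards [ae_restrict_mem measurableSet_Ioc] with t ht
            exact hbd t ht
        _ = K * x := by
            rw [setIntegral_const, measureReal_def, Real.volume_Ioc, smul_eq_mul]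
            rw [ENNReal.toReal_ofReal (by linarith)]
            ring
    -- denominator bound
    have hden : x ^ (S-1) * ((1-x) / b) ≤ ∫ t in Ioc (0:ℝ) 1, bker (S-b) b t := by
      have hstep1 : ∀ t ∈ Ioc x 1, x ^ (S-1) * (1-t) ^ (b-1) ≤ bker (S-b) b t := by
        intro t ht
        have hxt : x < t := ht.1
        have ht1 : t ≤ 1 := ht.2
        apply mul_le_mul_of_nonneg_right _ (Real.rpow_nonneg (by linarith) _)
        calc x ^ (S-1) ≤ x ^ (S-b-1) :=
              Real.rpow_le_rpow_of_exponent_ge hx0 hx1.le (by linarith)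
          _ ≤ t ^ (S-b-1) := Real.rpow_le_rpow hx0.le hxt.le hSb1
      have hint2 : IntegrableOn (fun t => (1-t) ^ (b-1)) (Ioc x 1) := by
        have h2 : IntervalIntegrable (fun u : ℝ => u ^ (b-1)) volume 0 (1-x) :=
          intervalIntegral.intervalIntegrable_rpow' (by linarith)
        have h3 := (h2.comp_sub_left 1).symm
        rw [show (1:ℝ) - (1-x) = x from by ring, sub_zero] at h3
        rwa [intervalIntegrable_iff_integrableOn_Ioc_of_le hx1.le] at h3
      calc x ^ (S-1) * ((1-x) / b)
          ≤ x ^ (S-1) * ((1-x) ^ b / b) := by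
            have h4 : (1-x) ≤ (1-x) ^ b := by
              calc (1-x) = (1-x) ^ (1:ℝ) := (Real.rpow_one _).symm
                _ ≤ (1-x) ^ b :=
                  Real.rpow_le_rpow_of_exponent_ge (by linarith) (by linarith) hb1.le
            gcongr
        _ = ∫ t in Ioc x 1, x ^ (S-1) * (1-t) ^ (b-1) := by
            rw [integral_const_mul, integral_one_sub_rpow hx1 hb0]
        _ ≤ ∫ t in Ioc x 1, bker (S-b) b t := by
            apply integral_mono_ae (hint2.const_mul _)
              ((bker_integrableOn hSb hb0).mono_set (Set.Ioc_subset_Ioc hx0.le le_rfl))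
            filter_upwards [ae_restrict_mem measurableSet_Ioc] with t ht
            exact hstep1 t ht
        _ ≤ _ := by
            apply setIntegral_mono_set (bker_integrableOn hSb hb0)
              (bker_nonneg_ae _ _ le_rfl le_rfl)
            exact HasSubset.Subset.eventuallyLE (Set.Ioc_subset_Ioc hx0.le le_rfl)
    have hdenpos : 0 < x ^ (S-1) * ((1-x) / b) :=
      mul_pos hxS (div_pos (by linarith) hb0)
    rw [betaCDF_eq]
    calc (∫ t in Ioc (0:ℝ) (min x 1), bker (S-b) b t) / ∫ t in Ioc (0:ℝ) 1, bker (S-b) b t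
        ≤ (K * x) / (x ^ (S-1) * ((1-x) / b)) :=
          div_le_div₀ (mul_nonneg hKpos.le hx0.le) hnum hdenpos hden
      _ = C * b := by
          rw [hC]
          field_simp
  · have : Tendsto (fun b : ℝ => C * b) (𝓝[>] 0) (𝓝 (C * 0)) :=
      (tendsto_const_nhds.mul tendsto_id).mono_left nhdsWithin_le_nhds
    simpa using this

lemma cdfOf_mono (μ : Measure ℝ) [IsFiniteMeasure μ] : Monotone (cdfOf μ) := by
  intro x y hxy
  exact ENNReal.toReal_mono (measure_ne_top μ _) (measure_mono (Set.Iic_subset_Iic.2 hxy))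

lemma cdfOf_nonneg (μ : Measure ℝ) (y : ℝ) : 0 ≤ cdfOf μ y := ENNReal.toReal_nonneg

lemma cdfOf_le_one (μ : Measure ℝ) [IsProbabilityMeasure μ] (y : ℝ) : cdfOf μ y ≤ 1 := by
  unfold cdfOf
  rw [show (1:ℝ) = (1 : ℝ≥0∞).toReal from by simp]
  exact ENNReal.toReal_mono (by simp) (prob_le_one)

lemma measure_Ioc_toReal (μ : Measure ℝ) [IsFiniteMeasure μ] {c d : ℝ} (h : c ≤ d) :
    (μ (Set.Ioc c d)).toReal = cdfOf μ d - cdfOf μ c := by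
  have hu : μ (Set.Iic c) + μ (Set.Ioc c d) = μ (Set.Iic d) := by
    rw [← measure_union (Set.Iic_disjoint_Ioc le_rfl) measurableSet_Ioc,
      Set.Iic_union_Ioc_eq_Iic h]
  have h1 := congrArg ENNReal.toReal hu
  rw [ENNReal.toReal_add (measure_ne_top μ _) (measure_ne_top μ _)] at h1
  unfold cdfOf
  linarith

lemma measure_Ioc_zero_of_cdf_eq (μ : Measure ℝ) [IsFiniteMeasure μ] {c d : ℝ} (h : c ≤ d)
    (he : cdfOf μ d = cdfOf μ c) : μ (Set.Ioc c d) = 0 := by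
  have h2 := measure_Ioc_toReal μ h
  rw [he, sub_self] at h2
  exact ((ENNReal.toReal_eq_zero_iff _).1 h2).resolve_right (measure_ne_top μ _)

lemma atom_null (μ : Measure ℝ) [IsProbabilityMeasure μ] {F0 : ℝ → ℝ} (hF0 : F0 = cdfOf μ)
    (hc : Continuous F0) (a : ℝ) : μ {a} = 0 := by
  have key : ∀ n : ℕ, (μ {a}).toReal ≤ F0 a - F0 (a - 1/(n+1)) := by
    intro n
    have hpos : (0:ℝ) < 1/((n:ℝ)+1) := by positivity
    have h1 : ({a} : Set ℝ) ⊆ Set.Ioc (a - 1/((n:ℝ)+1)) a := by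
      intro x hx
      rw [Set.mem_singleton_iff] at hx
      subst hx
      exact ⟨by linarith, le_rfl⟩
    have h3 : (μ {a}).toReal ≤ (μ (Set.Ioc (a - 1/((n:ℝ)+1)) a)).toReal :=
      ENNReal.toReal_mono (measure_ne_top μ _) (measure_mono h1)
    rw [measure_Ioc_toReal μ (by linarith)] at h3
    rw [hF0]
    exact h3
  have hlim : Tendsto (fun n : ℕ => F0 a - F0 (a - 1/((n:ℝ)+1))) atTop (𝓝 (F0 a - F0 a)) := by
    apply Tendsto.sub tendsto_const_nhds
    apply (hc.continuousAt).tendsto.comp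
    have h5 : Tendsto (fun n : ℕ => 1/((n:ℝ)+1)) atTop (𝓝 0) :=
      tendsto_one_div_add_atTop_nhds_zero_nat
    have := tendsto_const_nhds (x := a) (f := atTop (α := ℕ)) |>.sub h5
    simpa using this
  rw [sub_self] at hlim
  have h6 : (μ {a}).toReal ≤ 0 := ge_of_tendsto' hlim key
  have h7 : (μ {a}).toReal = 0 := le_antisymm h6 ENNReal.toReal_nonneg
  exact ((ENNReal.toReal_eq_zero_iff _).1 h7).resolve_right (measure_ne_top μ _)

lemma level_null
    (μ0 : Measure ℝ) [IsProbabilityMeasure μ0]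
    (k : ℕ) (μc : ℕ → Measure ℝ) (hprob : ∀ i < k, IsProbabilityMeasure (μc i))
    (F : ℕ → ℝ → ℝ) (hF : ∀ i < k, F i = cdfOf (μc i))
    (hsupp : (⋃ i ∈ Finset.range k, msupport (μc i)) = msupport μ0)
    (w : ℕ → ℝ) (hw : ∀ i < k, 0 < w i)
    (hatom : ∀ a : ℝ, μ0 {a} = 0)
    (H : ℝ → ℝ) (hH : ∀ y, H y = ∑ i ∈ Finset.range k, w i * F i y)
    (t : ℝ) : μ0 {y | H y = t} = 0 := by
  have hmono : ∀ i < k, Monotone (F i) := by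
    intro i hi
    haveI := hprob i hi
    rw [hF i hi]
    exact cdfOf_mono (μc i)
  have claim1 : ∀ p r z : ℝ, H p = t → H r = t → p < z → z < r →
      ∃ U : Set ℝ, IsOpen U ∧ z ∈ U ∧ μ0 U = 0 := by
    intro p r z hp hr hpz hzr
    have hpr : p ≤ r := le_of_lt (lt_trans hpz hzr)
    have hFeq : ∀ i < k, F i r = F i p := by
      have hsum0 : ∑ i ∈ Finset.range k, w i * (F i r - F i p) = 0 := by
        have he : ∑ i ∈ Finset.range k, w i * (F i r - F i p) = H r - H p := by
          rw [hH r, hH p, ← Finset.sum_sub_distrib]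
          exact Finset.sum_congr rfl (fun j _ => by ring)
        rw [he, hp, hr, sub_self]
      intro i hi
      have hnn : ∀ j ∈ Finset.range k, 0 ≤ w j * (F j r - F j p) := by
        intro j hj
        have hj' := Finset.mem_range.1 hj
        exact mul_nonneg (hw j hj').le (sub_nonneg.2 (hmono j hj' hpr))
      have h0 := (Finset.sum_eq_zero_iff_of_nonneg hnn).1 hsum0 i (Finset.mem_range.2 hi)
      rcases mul_eq_zero.1 h0 with h | h
      · exact absurd h (hw i hi).ne'
      · linarith [sub_eq_zero.1 h]
    have hnull : ∀ i < k, μc i (Set.Ioc p r) = 0 := by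
      intro i hi
      haveI := hprob i hi
      apply measure_Ioc_zero_of_cdf_eq (μc i) hpr
      rw [← hF i hi]
      exact hFeq i hi
    have hz : z ∉ msupport μ0 := by
      intro hzsupp
      rw [← hsupp] at hzsupp
      simp only [Set.mem_iUnion] at hzsupp
      obtain ⟨i, hi, hzi⟩ := hzsupp
      have hi' := Finset.mem_range.1 hi
      have hposU := hzi (Set.Ioo p r) isOpen_Ioo ⟨hpz, hzr⟩
      have hz0 : μc i (Set.Ioo p r) = 0 :=
        measure_mono_null Set.Ioo_subset_Ioc_self (hnull i hi')
      rw [hz0] at hposU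
      exact lt_irrefl _ hposU
    simp only [msupport, Set.mem_setOf_eq, not_forall] at hz
    obtain ⟨U, hUopen, hzU, hU⟩ := hz
    exact ⟨U, hUopen, hzU, le_antisymm (not_lt.1 hU) zero_le'⟩
  classical
  set S := {y | H y = t} with hS
  set S' := {z | H z = t ∧ (∃ p, H p = t ∧ p < z) ∧ (∃ r, H r = t ∧ z < r)} with hS'
  set A := {z | H z = t ∧ ¬∃ p, H p = t ∧ p < z} with hA
  set B := {z | H z = t ∧ ¬∃ r, H r = t ∧ z < r} with hB
  have hS'null : μ0 S' = 0 := by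
    apply measure_null_of_locally_null
    intro z hz
    obtain ⟨hzt, ⟨p, hpt, hpz⟩, ⟨r, hrt, hzr⟩⟩ := hz
    obtain ⟨U, hUo, hzU, hU0⟩ := claim1 p r z hpt hrt hpz hzr
    exact ⟨U, mem_nhdsWithin_of_mem_nhds (hUo.mem_nhds hzU), hU0⟩
  have hsub : ∀ s : Set ℝ, s.Subsingleton → μ0 s = 0 := by
    intro s hs
    rcases hs.eq_empty_or_singleton with h | ⟨a, h⟩
    · rw [h]; exact measure_empty
    · rw [h]; exact hatom a
  have hAnull : μ0 A = 0 := by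
    apply hsub
    intro x hx y hy
    by_contra hne
    rcases lt_or_gt_of_ne hne with h | h
    · exact hy.2 ⟨x, hx.1, h⟩
    · exact hx.2 ⟨y, hy.1, h⟩
  have hBnull : μ0 B = 0 := by
    apply hsub
    intro x hx y hy
    by_contra hne
    rcases lt_or_gt_of_ne hne with h | h
    · exact hx.2 ⟨y, hy.1, h⟩
    · exact hy.2 ⟨x, hx.1, h⟩
  have hcover : S ⊆ S' ∪ A ∪ B := by
    intro z hz
    simp only [hS, Set.mem_setOf_eq] at hz
    by_cases h1 : ∃ p, H p = t ∧ p < z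
    · by_cases h2 : ∃ r, H r = t ∧ z < r
      · exact Or.inl (Or.inl ⟨hz, h1, h2⟩)
      · exact Or.inr ⟨hz, h2⟩
    · exact Or.inl (Or.inr ⟨hz, h1⟩)
  apply le_antisymm _ zero_le'
  calc μ0 S ≤ μ0 (S' ∪ A ∪ B) := measure_mono hcover
    _ ≤ μ0 (S' ∪ A) + μ0 B := measure_union_le _ _
    _ ≤ (μ0 S' + μ0 A) + μ0 B := add_le_add_left (measure_union_le _ _) _
    _ = 0 := by rw [hS'null, hAnull, hBnull]; simp

lemma exists_median
    (μ0 : Measure ℝ) [IsProbabilityMeasure μ0]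
    (H : ℝ → ℝ) (hHcont : Continuous H)
    (hH0 : ∀ y, 0 ≤ H y) (hH1 : ∀ y, H y ≤ 1)
    (hlevel : ∀ t : ℝ, μ0 {y | H y = t} = 0) :
    ∃ q : ℝ, 0 < q ∧ q < 1 ∧ (μ0 {y | H y ≤ q}).toReal = 1/2 := by
  set G : ℝ → ℝ := fun t => (μ0 {y | H y ≤ t}).toReal with hG
  have hmeas : ∀ t : ℝ, MeasurableSet {y | H y ≤ t} := fun t =>
    measurableSet_le hHcont.measurable measurable_const
  have hGmono : Monotone G := fun s t hst =>
    ENNReal.toReal_mono (measure_ne_top _ _)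
      (measure_mono (fun y (hy : H y ≤ s) => le_trans hy hst))
  have hG0 : G 0 = 0 := by
    have h1 : μ0 {y | H y ≤ 0} = 0 :=
      measure_mono_null (fun y (hy : H y ≤ 0) => le_antisymm hy (hH0 y)) (hlevel 0)
    rw [hG]
    simp [h1]
  have hG1 : G 1 = 1 := by
    have h1 : {y : ℝ | H y ≤ 1} = Set.univ := by
      ext y; simp [hH1 y]
    rw [hG]
    simp [h1]
  set T : Set ℝ := {t | 1/2 ≤ G t} with hT
  have hT1 : (1:ℝ) ∈ T := by rw [hT]; simp only [Set.mem_setOf_eq, hG1]; norm_num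
  have hTne : T.Nonempty := ⟨1, hT1⟩
  have hTbdd : BddBelow T := by
    refine ⟨0, fun t ht => ?_⟩
    by_contra hc
    push_neg at hc
    have h2 : G t ≤ G 0 := hGmono hc.le
    rw [hG0] at h2
    have := ht
    rw [hT, Set.mem_setOf_eq] at this
    linarith
  set q : ℝ := sInf T with hq
  have hq1 : q ≤ 1 := csInf_le hTbdd hT1
  have hGq_ge : 1/2 ≤ G q := by
    set s : ℕ → Set ℝ := fun n => {y | H y ≤ q + 1/((n:ℝ)+1)} with hs
    have hanti : Antitone s := by
      intro n m hnm y hy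
      simp only [hs, Set.mem_setOf_eq] at hy ⊢
      have h3 : 1/((m:ℝ)+1) ≤ 1/((n:ℝ)+1) := by
        apply one_div_le_one_div_of_le (by positivity)
        have : (n:ℝ) ≤ m := Nat.cast_le.2 hnm
        linarith
      linarith
    have hiInter : (⋂ n, s n) = {y | H y ≤ q} := by
      ext y
      simp only [Set.mem_iInter, hs, Set.mem_setOf_eq]
      constructor
      · intro h
        by_contra hc
        push_neg at hc
        obtain ⟨n, hn⟩ := exists_nat_one_div_lt (sub_pos.2 hc)
        have := h n
        linarith
      · intro h n
        have : 0 < 1/((n:ℝ)+1) := by positivity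
        linarith
    have hmeq : μ0 {y | H y ≤ q} = ⨅ n, μ0 (s n) := by
      rw [← hiInter]
      exact Directed.measure_iInter (fun n => (hmeas _).nullMeasurableSet) (hanti.directed_ge)
        ⟨0, measure_ne_top _ _⟩
    have hband : ∀ n : ℕ, ENNReal.ofReal (1/2) ≤ μ0 (s n) := by
      intro n
      obtain ⟨t, htT, htlt⟩ := Real.lt_sInf_add_pos hTne
        (show (0:ℝ) < 1/((n:ℝ)+1) by positivity)
      rw [hT, Set.mem_setOf_eq] at htT
      calc ENNReal.ofReal (1/2) ≤ μ0 {y | H y ≤ t} :=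
            ENNReal.ofReal_le_of_le_toReal htT
        _ ≤ μ0 (s n) := measure_mono (fun y (hy : H y ≤ t) =>
            show H y ≤ q + 1/((n:ℝ)+1) from le_trans hy htlt.le)
    have h4 : ENNReal.ofReal (1/2) ≤ μ0 {y | H y ≤ q} := by
      rw [hmeq]
      exact le_iInf hband
    have h5 := ENNReal.toReal_mono (measure_ne_top _ _) h4
    rw [ENNReal.toReal_ofReal (by norm_num)] at h5
    exact h5
  have hq0 : 0 < q := by
    by_contra hc
    push_neg at hc
    have h2 : G q ≤ G 0 := hGmono hc
    rw [hG0] at h2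
    linarith
  have hGq_le : G q ≤ 1/2 := by
    set u : ℕ → Set ℝ := fun n => {y | H y ≤ q - 1/((n:ℝ)+1)} with hu
    have hmonou : Monotone u := by
      intro n m hnm y hy
      simp only [hu, Set.mem_setOf_eq] at hy ⊢
      have h3 : 1/((m:ℝ)+1) ≤ 1/((n:ℝ)+1) := by
        apply one_div_le_one_div_of_le (by positivity)
        have : (n:ℝ) ≤ m := Nat.cast_le.2 hnm
        linarith
      linarith
    have hUnion : (⋃ n, u n) = {y | H y < q} := by
      ext y
      simp only [Set.mem_iUnion, hu, Set.mem_setOf_eq]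
      constructor
      · rintro ⟨n, hn⟩
        have : 0 < 1/((n:ℝ)+1) := by positivity
        linarith
      · intro h
        obtain ⟨n, hn⟩ := exists_nat_one_div_lt (sub_pos.2 h)
        exact ⟨n, by linarith⟩
    have hlt : μ0 {y | H y < q} ≤ ENNReal.ofReal (1/2) := by
      rw [← hUnion, hmonou.directed_le.measure_iUnion]
      apply iSup_le
      intro n
      have htlt : q - 1/((n:ℝ)+1) < q := by
        have : 0 < 1/((n:ℝ)+1) := by positivity
        linarith
      have htnot : q - 1/((n:ℝ)+1) ∉ T := by
        intro hmem
        exact absurd (csInf_le hTbdd hmem) (not_le.2 htlt)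
      have hGlt : G (q - 1/((n:ℝ)+1)) < 1/2 := by
        rw [hT, Set.mem_setOf_eq] at htnot
        exact not_le.1 htnot
      calc μ0 (u n) = ENNReal.ofReal (G (q - 1/((n:ℝ)+1))) := by
            rw [hG]
            exact (ENNReal.ofReal_toReal (measure_ne_top _ _)).symm
        _ ≤ ENNReal.ofReal (1/2) := ENNReal.ofReal_le_ofReal hGlt.le
    have hsplit : μ0 {y | H y ≤ q} ≤ μ0 {y | H y < q} + μ0 {y | H y = q} := by
      calc μ0 {y | H y ≤ q} ≤ μ0 ({y | H y < q} ∪ {y | H y = q}) := by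
            apply measure_mono
            intro y hy
            rcases lt_or_eq_of_le (show H y ≤ q from hy) with h | h
            · exact Or.inl h
            · exact Or.inr h
        _ ≤ _ := measure_union_le _ _
    rw [hlevel q, add_zero] at hsplit
    have h6 : μ0 {y | H y ≤ q} ≤ ENNReal.ofReal (1/2) := le_trans hsplit hlt
    have h7 := ENNReal.toReal_mono (by simp) h6
    rw [ENNReal.toReal_ofReal (by norm_num)] at h7
    exact h7
  have hqlt1 : q < 1 := by
    rcases lt_or_eq_of_le hq1 with h | h
    · exact h
    · rw [h] at hGq_le
      rw [hG1] at hGq_le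
      norm_num at hGq_le
  exact ⟨q, hq0, hqlt1, le_antisymm hGq_le hGq_ge⟩

section Var

variable {Ω : Type*} [MeasurableSpace Ω] (Q : Measure Ω) [IsProbabilityMeasure Q] (X : Ω → ℝ)

lemma Zmeas {a b : ℝ} (ha : 0 < a) (hb : 0 < b) (hX : Measurable X) :
    AEStronglyMeasurable (fun ω => betaCDF a b (X ω)) Q :=
  ((betaCDF_measurable ha hb).comp hX).aestronglyMeasurable

noncomputable def E1 : ℝ × ℝ → ℝ := fun p => ∫ ω, betaCDF p.1 p.2 (X ω) ∂Q
noncomputable def E2 : ℝ × ℝ → ℝ := fun p => ∫ ω, (betaCDF p.1 p.2 (X ω))^2 ∂Q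
noncomputable def Vr : ℝ × ℝ → ℝ := fun p => E2 Q X p - (E1 Q X p)^2

lemma var_eq {a b : ℝ} (ha : 0 < a) (hb : 0 < b) (hX : Measurable X) :
    ProbabilityTheory.variance (fun ω => betaCDF a b (X ω)) Q = Vr Q X (a, b) := by
  have hmem : MemLp (fun ω => betaCDF a b (X ω)) 2 Q := by
    apply MemLp.of_bound (Zmeas Q X ha hb hX) 1
    apply Filter.Eventually.of_forall
    intro ω
    rw [Real.norm_eq_abs, abs_le]
    exact ⟨by linarith [betaCDF_nonneg ha hb (X ω)], betaCDF_le_one ha hb (X ω)⟩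
  rw [ProbabilityTheory.variance_eq_sub hmem]
  unfold Vr E2 E1
  simp only [Pi.pow_apply]

lemma Vr_contAt {a b : ℝ} (ha : 0 < a) (hb : 0 < b) (hX : Measurable X) :
    ContinuousAt (Vr Q X) (a, b) := by
  have hU : {p : ℝ × ℝ | 0 < p.1 ∧ 0 < p.2} ∈ 𝓝 (a, b) :=
    IsOpen.mem_nhds ((isOpen_lt continuous_const continuous_fst).inter
      (isOpen_lt continuous_const continuous_snd)) ⟨ha, hb⟩
  have h1 : ContinuousAt (E1 Q X) (a, b) := by
    apply continuousAt_of_dominated (bound := fun _ => (1:ℝ))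
    · filter_upwards [hU] with p hp
      exact Zmeas Q X hp.1 hp.2 hX
    · filter_upwards [hU] with p hp
      apply Filter.Eventually.of_forall
      intro ω
      rw [Real.norm_eq_abs, abs_le]
      exact ⟨by linarith [betaCDF_nonneg hp.1 hp.2 (X ω)], betaCDF_le_one hp.1 hp.2 (X ω)⟩
    · exact integrable_const 1
    · exact Filter.Eventually.of_forall fun ω => continuousAt_betaCDF ha hb (X ω)
  have h2 : ContinuousAt (E2 Q X) (a, b) := by
    apply continuousAt_of_dominated (bound := fun _ => (1:ℝ))
    · filter_upwards [hU] with p hp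
      exact ((((betaCDF_measurable hp.1 hp.2).comp hX).pow_const 2).aestronglyMeasurable)
    · filter_upwards [hU] with p hp
      apply Filter.Eventually.of_forall
      intro ω
      rw [Real.norm_eq_abs, abs_of_nonneg (sq_nonneg _)]
      nlinarith [betaCDF_nonneg hp.1 hp.2 (X ω), betaCDF_le_one hp.1 hp.2 (X ω)]
    · exact integrable_const 1
    · exact Filter.Eventually.of_forall fun ω => (continuousAt_betaCDF ha hb (X ω)).pow 2
  exact h2.sub (h1.pow 2)

lemma Vr_tendsto_quarter (hX : Measurable X) {q : ℝ} (hq0 : 0 < q) (hq1 : q < 1)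
    (hne : ∀ᵐ ω ∂Q, X ω ≠ q) (hhalf : (Q {ω | q < X ω}).toReal = 1/2) :
    Tendsto (fun s => Vr Q X (s*q, s*(1-q))) atTop (𝓝 (1/4)) := by
  classical
  set χ : Ω → ℝ := ({ω | q < X ω}).indicator (fun _ => (1:ℝ)) with hχ
  have hmeasS : MeasurableSet {ω | q < X ω} := measurableSet_lt measurable_const hX
  have hχint : ∫ ω, χ ω ∂Q = 1/2 := by
    rw [hχ, MeasureTheory.integral_indicator_const _ hmeasS, measureReal_def, hhalf, smul_eq_mul, mul_one]
  have hχsq : ∀ ω, (χ ω)^2 = χ ω := by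
    intro ω
    rw [hχ]
    by_cases hmem : ω ∈ {ω | q < X ω}
    · rw [Set.indicator_of_mem hmem]; norm_num
    · rw [Set.indicator_of_notMem hmem]; norm_num
  have hptw : ∀ᵐ ω ∂Q,
      Tendsto (fun s => betaCDF (s*q) (s*(1-q)) (X ω)) atTop (𝓝 (χ ω)) := by
    filter_upwards [hne] with ω hω
    rcases lt_or_gt_of_ne hω with h | h
    · have h0 : χ ω = 0 := by
        rw [hχ, Set.indicator_of_notMem]
        simp only [Set.mem_setOf_eq, not_lt]
        exact h.le
      rw [h0]
      exact tendsto_betaCDF_atTop_lt hq0 hq1 h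
    · have h0 : χ ω = 1 := by
        rw [hχ, Set.indicator_of_mem]
        exact h
      rw [h0]
      exact tendsto_betaCDF_atTop_gt hq0 hq1 h
  have hE1 : Tendsto (fun s => E1 Q X (s*q, s*(1-q))) atTop (𝓝 (1/2)) := by
    rw [← hχint]
    apply tendsto_integral_filter_of_dominated_convergence (bound := fun _ => (1:ℝ))
    · filter_upwards [eventually_gt_atTop (0:ℝ)] with s hs
      exact Zmeas Q X (mul_pos hs hq0) (mul_pos hs (by linarith)) hX
    · filter_upwards [eventually_gt_atTop (0:ℝ)] with s hs
      apply Filter.Eventually.of_forall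
      intro ω
      have ha := mul_pos hs hq0
      have hb := mul_pos hs (show (0:ℝ) < 1 - q by linarith)
      rw [Real.norm_eq_abs, abs_le]
      exact ⟨by linarith [betaCDF_nonneg ha hb (X ω)], betaCDF_le_one ha hb (X ω)⟩
    · exact integrable_const 1
    · exact hptw
  have hE2 : Tendsto (fun s => E2 Q X (s*q, s*(1-q))) atTop (𝓝 (1/2)) := by
    have hχ2 : ∫ ω, (χ ω)^2 ∂Q = 1/2 := by
      simp_rw [hχsq]
      exact hχint
    rw [← hχ2]
    apply tendsto_integral_filter_of_dominated_convergence (bound := fun _ => (1:ℝ))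
    · filter_upwards [eventually_gt_atTop (0:ℝ)] with s hs
      exact ((((betaCDF_measurable (mul_pos hs hq0)
        (mul_pos hs (by linarith))).comp hX).pow_const 2).aestronglyMeasurable)
    · filter_upwards [eventually_gt_atTop (0:ℝ)] with s hs
      apply Filter.Eventually.of_forall
      intro ω
      have ha := mul_pos hs hq0
      have hb := mul_pos hs (show (0:ℝ) < 1 - q by linarith)
      rw [Real.norm_eq_abs, abs_of_nonneg (sq_nonneg _)]
      nlinarith [betaCDF_nonneg ha hb (X ω), betaCDF_le_one ha hb (X ω)]
    · exact integrable_const 1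
    · filter_upwards [hptw] with ω hω
      exact hω.pow 2
  have hfin := hE2.sub (hE1.pow 2)
  norm_num at hfin
  exact hfin

lemma Vr_tendsto_zero (hX : Measurable X) {S : ℝ} (hS : 2 ≤ S)
    (hlt1 : ∀ᵐ ω ∂Q, X ω < 1) :
    Tendsto (fun b => Vr Q X (S-b, b)) (𝓝[>] (0:ℝ)) (𝓝 0) := by
  have hev : ∀ᶠ b : ℝ in 𝓝[>] (0:ℝ), 0 < b ∧ b < 1 := by
    filter_upwards [Ioo_mem_nhdsGT_of_mem (Set.mem_Ico.2 ⟨le_refl (0:ℝ), one_pos⟩)] with b hb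
    exact ⟨hb.1, hb.2⟩
  have hptw : ∀ᵐ ω ∂Q, Tendsto (fun b => betaCDF (S-b) b (X ω)) (𝓝[>] (0:ℝ)) (𝓝 0) := by
    filter_upwards [hlt1] with ω hω
    exact tendsto_betaCDF_bzero hS hω
  have hE1 : Tendsto (fun b => E1 Q X (S-b, b)) (𝓝[>] (0:ℝ)) (𝓝 0) := by
    suffices key : Tendsto (fun b => E1 Q X (S-b, b)) (𝓝[>] (0:ℝ)) (𝓝 (∫ _ω, (0:ℝ) ∂Q)) by
      simpa using key
    apply tendsto_integral_filter_of_dominated_convergence (bound := fun _ => (1:ℝ))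
    · filter_upwards [hev] with b hb
      exact Zmeas Q X (by linarith [hb.2] : (0:ℝ) < S - b) hb.1 hX
    · filter_upwards [hev] with b hb
      apply Filter.Eventually.of_forall
      intro ω
      have ha : (0:ℝ) < S - b := by linarith [hb.2]
      rw [Real.norm_eq_abs, abs_le]
      exact ⟨by linarith [betaCDF_nonneg ha hb.1 (X ω)], betaCDF_le_one ha hb.1 (X ω)⟩
    · exact integrable_const 1
    · exact hptw
  have hE2 : Tendsto (fun b => E2 Q X (S-b, b)) (𝓝[>] (0:ℝ)) (𝓝 0) := by
    suffices key : Tendsto (fun b => E2 Q X (S-b, b)) (𝓝[>] (0:ℝ)) (𝓝 (∫ _ω, (0:ℝ) ∂Q)) by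
      simpa using key
    apply tendsto_integral_filter_of_dominated_convergence (bound := fun _ => (1:ℝ))
    · filter_upwards [hev] with b hb
      exact ((((betaCDF_measurable (by linarith [hb.2] : (0:ℝ) < S - b) hb.1).comp
        hX).pow_const 2).aestronglyMeasurable)
    · filter_upwards [hev] with b hb
      apply Filter.Eventually.of_forall
      intro ω
      have ha : (0:ℝ) < S - b := by linarith [hb.2]
      rw [Real.norm_eq_abs, abs_of_nonneg (sq_nonneg _)]
      nlinarith [betaCDF_nonneg ha hb.1 (X ω), betaCDF_le_one ha hb.1 (X ω)]
    · exact integrable_const 1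
    · filter_upwards [hptw] with ω hω
      have := hω.pow 2
      norm_num at this
      exact this
  have hfin := hE2.sub (hE1.pow 2)
  norm_num at hfin
  exact hfin

end Var

end BlpAux

set_option maxHeartbeats 2000000 in
/-- **Proposition 9 of Gneiting–Ranjan.** For continuous cumulative
distribution functions `F₁, …, F_k` whose supports unite to the support of the law `F₀`
of the observation `Y`, fixed strictly positive weights summing to one, and the
beta-transformed linear pool PIT `Z_{α,β} = B_{α,β}(Σᵢ wᵢ Fᵢ(Y))`: as `α, β > 0` vary,
`Var(Z_{α,β})` attains every value in `(0, 1/4)`. (Components are indexed by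
`0, …, k−1` here.) -/
theorem blp_variance_attains_values
    {Ω : Type*} [MeasurableSpace Ω] (Q : Measure Ω) [IsProbabilityMeasure Q]
    (k : ℕ) (hk : 1 ≤ k)
    (μ0 : Measure ℝ) [IsProbabilityMeasure μ0]
    (F0 : ℝ → ℝ) (hF0 : F0 = cdfOf μ0) (hF0cont : Continuous F0)
    (μc : ℕ → Measure ℝ) (hprob : ∀ i < k, IsProbabilityMeasure (μc i))
    (F : ℕ → ℝ → ℝ) (hF : ∀ i < k, F i = cdfOf (μc i))
    (hFcont : ∀ i < k, Continuous (F i))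
    (hsupp : (⋃ i ∈ Finset.range k, msupport (μc i)) = msupport μ0)
    (w : ℕ → ℝ) (hw : ∀ i < k, 0 < w i) (hw1 : ∑ i ∈ Finset.range k, w i = 1)
    (Y : Ω → ℝ) (hYmeas : Measurable Y) (hYlaw : Q.map Y = μ0) :
    ∀ v ∈ Set.Ioo (0 : ℝ) (1 / 4),
      ∃ a b : ℝ, 0 < a ∧ 0 < b ∧
        variance
          (fun ω => betaCDF a b (∑ i ∈ Finset.range k, w i * F i (Y ω))) Q = v := by
  intro v hv
  obtain ⟨hv0, hv14⟩ := hv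
  classical
  set H : ℝ → ℝ := fun y => ∑ i ∈ Finset.range k, w i * F i y with hH
  set X : Ω → ℝ := fun ω => H (Y ω) with hXdef
  have hHcont : Continuous H := by
    apply continuous_finset_sum
    intro i hi
    exact continuous_const.mul (hFcont i (Finset.mem_range.1 hi))
  have hF01 : ∀ i < k, ∀ y, 0 ≤ F i y ∧ F i y ≤ 1 := by
    intro i hi y
    haveI := hprob i hi
    rw [hF i hi]
    exact ⟨BlpAux.cdfOf_nonneg _ y, BlpAux.cdfOf_le_one _ y⟩
  have hH0 : ∀ y, 0 ≤ H y := by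
    intro y
    apply Finset.sum_nonneg
    intro i hi
    have hi' := Finset.mem_range.1 hi
    exact mul_nonneg (hw i hi').le (hF01 i hi' y).1
  have hH1 : ∀ y, H y ≤ 1 := by
    intro y
    calc H y ≤ ∑ i ∈ Finset.range k, w i := by
          apply Finset.sum_le_sum
          intro i hi
          have hi' := Finset.mem_range.1 hi
          calc w i * F i y ≤ w i * 1 :=
                mul_le_mul_of_nonneg_left (hF01 i hi' y).2 (hw i hi').le
            _ = w i := mul_one _
      _ = 1 := hw1
  have hatom : ∀ a : ℝ, μ0 {a} = 0 := BlpAux.atom_null μ0 hF0 hF0cont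
  have hlevel : ∀ t : ℝ, μ0 {y | H y = t} = 0 :=
    BlpAux.level_null μ0 k μc hprob F hF hsupp w hw hatom H (fun y => rfl)
  obtain ⟨q, hq0, hq1, hmed⟩ := BlpAux.exists_median μ0 H hHcont hH0 hH1 hlevel
  have hXmeas : Measurable X := hHcont.measurable.comp hYmeas
  have hmap : ∀ A : Set ℝ, MeasurableSet A → Q (Y ⁻¹' A) = μ0 A := by
    intro A hA
    rw [← hYlaw, Measure.map_apply hYmeas hA]
  have hne : ∀ᵐ ω ∂Q, X ω ≠ q := by
    rw [ae_iff]
    have hset : {ω | ¬ X ω ≠ q} = Y ⁻¹' {y | H y = q} := by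
      ext ω
      simp [hXdef]
    rw [hset, hmap _ ((isClosed_eq hHcont continuous_const).measurableSet), hlevel q]
  have hlt1 : ∀ᵐ ω ∂Q, X ω < 1 := by
    rw [ae_iff]
    refine measure_mono_null (show {ω | ¬ X ω < 1} ⊆ Y ⁻¹' {y | H y = 1} from ?_) ?_
    · intro ω hω
      simp only [Set.mem_setOf_eq, not_lt] at hω
      exact le_antisymm (hH1 (Y ω)) hω
    · rw [hmap _ ((isClosed_eq hHcont continuous_const).measurableSet)]
      exact hlevel 1
  have hhalf : (Q {ω | q < X ω}).toReal = 1/2 := by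
    have hmq : MeasurableSet {y | H y ≤ q} :=
      measurableSet_le hHcont.measurable measurable_const
    have hset : {ω | q < X ω} = Y ⁻¹' {y | H y ≤ q}ᶜ := by
      ext ω
      simp [hXdef, not_le]
    rw [hset, hmap _ hmq.compl, measure_compl hmq (measure_ne_top _ _), measure_univ,
      ENNReal.toReal_sub_of_le prob_le_one (by simp), hmed]
    norm_num
  have hquarter := BlpAux.Vr_tendsto_quarter Q X hXmeas hq0 hq1 hne hhalf
  obtain ⟨S, hSgt, hS2⟩ := ((hquarter.eventually (eventually_gt_nhds hv14)).and
    (eventually_ge_atTop (2:ℝ))).exists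
  have hzero := BlpAux.Vr_tendsto_zero Q X hXmeas hS2 hlt1
  have hSqpos : 0 < S * q := mul_pos (by linarith) hq0
  have hexp : S * (1-q) = S - S*q := by ring
  have hSq : 0 < S * (1-q) := mul_pos (by linarith) (by linarith)
  obtain ⟨b₁, hb₁lt, hb₁mem⟩ := ((hzero.eventually (eventually_lt_nhds hv0)).and
    (Ioo_mem_nhdsGT_of_mem (Set.mem_Ico.2 ⟨le_rfl, hSq⟩))).exists
  set g : ℝ → ℝ := fun b => BlpAux.Vr Q X (S-b, b) with hg
  have hcont : ContinuousOn g (Set.Icc b₁ (S*(1-q))) := by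
    intro b hb
    have hb0 : 0 < b := lt_of_lt_of_le hb₁mem.1 hb.1
    have hbS : b < S := by
      have h2 := hb.2
      rw [hexp] at h2
      linarith
    apply ContinuousAt.continuousWithinAt
    have hc1 : ContinuousAt (BlpAux.Vr Q X) (S - b, b) :=
      BlpAux.Vr_contAt Q X (a := S - b) (b := b) (by linarith) hb0 hXmeas
    have hc2 : ContinuousAt (fun t : ℝ => ((S - t : ℝ), t)) b :=
      (((continuous_const.sub continuous_id).prodMk continuous_id).continuousAt)
    show ContinuousAt (fun t : ℝ => BlpAux.Vr Q X (S - t, t)) b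
    exact ContinuousAt.comp (g := BlpAux.Vr Q X) hc1 hc2
  have hgval : g (S*(1-q)) = BlpAux.Vr Q X (S*q, S*(1-q)) := by
    rw [hg]
    have h3 : S - S*(1-q) = S*q := by ring
    simp only [h3]
  have hvmem : v ∈ Set.Icc (g b₁) (g (S*(1-q))) := by
    constructor
    · exact hb₁lt.le
    · rw [hgval]; exact hSgt.le
  obtain ⟨b, hbmem, hgb⟩ := intermediate_value_Icc hb₁mem.2.le hcont hvmem
  have hb0 : 0 < b := lt_of_lt_of_le hb₁mem.1 hbmem.1
  have hSb : 0 < S - b := by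
    have h2 := hbmem.2
    rw [hexp] at h2
    linarith
  refine ⟨S - b, b, hSb, hb0, ?_⟩
  calc variance (fun ω => betaCDF (S-b) b (∑ i ∈ Finset.range k, w i * F i (Y ω))) Q
      = variance (fun ω => betaCDF (S-b) b (X ω)) Q := rfl
    _ = BlpAux.Vr Q X (S-b, b) := BlpAux.var_eq Q X hSb hb0 hXmeas
    _ = v := hgb
end
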